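/- arXiv:1305.2665 — 8 statements merged into one kernel-verified Lean document; each statement's English description precedes it below -/
import Mathlib

section
/- Let p, s, r be integers with p ≥ 2, 1 ≤ s ≤ p−1 and r ≥ 1, and let u be a complex number with |u| < 1. Then Σ_{n=0}^∞ (u^{((r+2n)p−s)²} − u^{((r+2n)p+s)²}) = Σ_{n=0}^∞ (u^{((r−2n−1)p−(p−s))²} − u^{((r−2n−2)p−s)²}), both series converging absolutely. -/
/-- The Felder-complex decomposition of the singlet character:
`Σ_{n≥0} (u^{((r+2n)p−s)²} − u^{((r+2n)p+s)²})
  = Σ_{n≥0} (u^{((r−2n−1)p−(p−s))²} − u^{((r−2n−2)p−s)²})`,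
both series converging absolutely, for `p ≥ 2`, `1 ≤ s ≤ p−1`, `r ≥ 1` and `|u| < 1`. -/
theorem stmt_1 (p s r : ℤ) (hp : 2 ≤ p) (hs1 : 1 ≤ s) (hs2 : s ≤ p - 1) (hr : 1 ≤ r)
    (u : ℂ) (hu : ‖u‖ < 1) :
    Summable (fun n : ℕ => ‖u ^ (((r + 2 * (n : ℤ)) * p - s) ^ 2)
        - u ^ (((r + 2 * (n : ℤ)) * p + s) ^ 2)‖) ∧
    Summable (fun n : ℕ => ‖u ^ (((r - 2 * (n : ℤ) - 1) * p - (p - s)) ^ 2)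
        - u ^ (((r - 2 * (n : ℤ) - 2) * p - s) ^ 2)‖) ∧
    (∑' n : ℕ, (u ^ (((r + 2 * (n : ℤ)) * p - s) ^ 2)
        - u ^ (((r + 2 * (n : ℤ)) * p + s) ^ 2)))
      = ∑' n : ℕ, (u ^ (((r - 2 * (n : ℤ) - 1) * p - (p - s)) ^ 2)
        - u ^ (((r - 2 * (n : ℤ) - 2) * p - s) ^ 2)) := by
  set a : ℕ → ℂ := fun n : ℕ => u ^ (((r + 2 * (n : ℤ)) * p - s) ^ 2)
      - u ^ (((r + 2 * (n : ℤ)) * p + s) ^ 2) with ha_def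
  set g : ℕ → ℂ := fun n : ℕ => u ^ (((r - 2 * (n : ℤ) - 1) * p - (p - s)) ^ 2)
      - u ^ (((r - 2 * (n : ℤ) - 2) * p - s) ^ 2) with hg_def
  have hu1 : ‖u‖ ≤ 1 := le_of_lt hu
  -- basic norm bound for powers
  have hb : ∀ (e : ℤ) (n : ℕ), (n : ℤ) ≤ e → ‖u ^ e‖ ≤ ‖u‖ ^ n := by
    intro e n he
    lift e to ℕ using le_trans (Int.ofNat_nonneg n) he
    rw [zpow_natCast, norm_pow]
    exact pow_le_pow_of_le_one (norm_nonneg u) hu1 (by exact_mod_cast he)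
  have hsq : ∀ (x : ℤ) (n : ℕ), 2 * (n : ℤ) + 1 ≤ x → (n : ℤ) ≤ x ^ 2 := by
    intro x n hx
    have hn : (0 : ℤ) ≤ (n : ℤ) := Int.ofNat_nonneg n
    nlinarith [sq_nonneg (x - 2 * (n : ℤ) - 1)]
  have he1 : ∀ n : ℕ, (n : ℤ) ≤ ((r + 2 * (n : ℤ)) * p - s) ^ 2 := by
    intro n
    refine hsq _ n ?_
    have hn : (0 : ℤ) ≤ (n : ℤ) := Int.ofNat_nonneg n
    nlinarith
  have he2 : ∀ n : ℕ, (n : ℤ) ≤ ((r + 2 * (n : ℤ)) * p + s) ^ 2 := by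
    intro n
    refine hsq _ n ?_
    have hn : (0 : ℤ) ≤ (n : ℤ) := Int.ofNat_nonneg n
    nlinarith
  -- summability of the first series
  have ha : Summable (fun n : ℕ => ‖a n‖) := by
    refine Summable.of_nonneg_of_le (fun n => norm_nonneg _) (fun n => ?_)
      ((summable_geometric_of_lt_one (norm_nonneg u) hu).mul_left 2)
    calc ‖a n‖ ≤ ‖u ^ (((r + 2 * (n : ℤ)) * p - s) ^ 2)‖
          + ‖u ^ (((r + 2 * (n : ℤ)) * p + s) ^ 2)‖ := norm_sub_le _ _
      _ ≤ ‖u‖ ^ n + ‖u‖ ^ n := add_le_add (hb _ n (he1 n)) (hb _ n (he2 n))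
      _ = 2 * ‖u‖ ^ n := by ring
  -- the shift
  set R : ℕ := (r - 1).toNat with hRdef
  have hRz : (R : ℤ) = r - 1 := Int.toNat_of_nonneg (by omega)
  have hshift : (fun n : ℕ => g (n + R)) = a := by
    funext n
    simp only [hg_def, ha_def]
    have h1 : (r - 2 * ((n : ℤ) + (R : ℤ)) - 1) * p - (p - s)
        = -((r + 2 * (n : ℤ)) * p - s) := by rw [hRz]; ring
    have h2 : (r - 2 * ((n : ℤ) + (R : ℤ)) - 2) * p - s
        = -((r + 2 * (n : ℤ)) * p + s) := by rw [hRz]; ring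
    simp only [Nat.cast_add]
    rw [h1, h2, neg_sq, neg_sq]
  have hgnorm : Summable (fun n : ℕ => ‖g n‖) := by
    refine (summable_nat_add_iff R).mp ?_
    have : (fun n : ℕ => ‖g (n + R)‖) = fun n => ‖a n‖ := by
      funext n; rw [congrFun hshift n]
    rw [this]; exact ha
  refine ⟨ha, hgnorm, ?_⟩
  have hsg : Summable g := hgnorm.of_norm
  have hmain : (∑ i ∈ Finset.range R, g i) + ∑' i : ℕ, g (i + R) = ∑' i : ℕ, g i :=
    Summable.sum_add_tsum_nat_add' ((summable_nat_add_iff R).mpr hsg)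
  -- the finite sum vanishes by the antisymmetric pairing j ↔ R-1-j
  have hpair : ∀ j : ℕ, j < R → g (R - 1 - j) = -g j := by
    intro j hj
    have hcast : ((R - 1 - j : ℕ) : ℤ) = (R : ℤ) - 1 - (j : ℤ) := by omega
    simp only [hg_def]
    have h1 : (r - 2 * ((R : ℤ) - 1 - (j : ℤ)) - 1) * p - (p - s)
        = -((r - 2 * (j : ℤ) - 2) * p - s) := by rw [hRz]; ring
    have h2 : (r - 2 * ((R : ℤ) - 1 - (j : ℤ)) - 2) * p - s
        = -((r - 2 * (j : ℤ) - 1) * p - (p - s)) := by rw [hRz]; ring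
    rw [hcast, h1, h2, neg_sq, neg_sq]
    ring
  have hzero : (∑ i ∈ Finset.range R, g i) = 0 := by
    have h1 : ∑ j ∈ Finset.range R, g (R - 1 - j) = ∑ j ∈ Finset.range R, g j :=
      Finset.sum_range_reflect g R
    have h2 : ∑ j ∈ Finset.range R, g (R - 1 - j) = -∑ j ∈ Finset.range R, g j := by
      rw [← Finset.sum_neg_distrib]
      exact Finset.sum_congr rfl fun j hj => hpair j (Finset.mem_range.mp hj)
    have : (∑ j ∈ Finset.range R, g j) + ∑ j ∈ Finset.range R, g j = 0 := by
      nth_rewrite 1 [← h1]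
      rw [h2]; ring
    exact add_self_eq_zero.mp this
  have htsuma : (∑' n : ℕ, a n) = ∑' i : ℕ, g (i + R) := by rw [hshift]
  rw [← ha_def] at *
  rw [htsuma, ← hmain, hzero, zero_add]
end

section
/- Let p and s be integers with p ≥ 2 and 1 ≤ s ≤ p−1, let r ∈ {1,2}, and let u be a complex number with |u| < 1. Then Σ_{n∈ℤ} u^{((r+2n)p−s)²} = Σ_{n=0}^∞ (2n+r)(u^{((2n+r)p−s)²} − u^{((2n+r)p+s)²}) + Σ_{n=0}^∞ (2n+3−r)(u^{((2n+3−r)p−(p−s))²} − u^{((2n+3−r)p+(p−s))²}), all series converging absolutely. -/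
open Filter Topology

private lemma coef_norm_eq (n : ℕ) (c : ℝ) (hc : 0 ≤ c) :
    ‖2 * (n : ℂ) + (c : ℂ)‖ = 2 * (n : ℝ) + c := by
  have e : 2 * (n : ℂ) + (c : ℂ) = ((2 * (n : ℝ) + c : ℝ) : ℂ) := by push_cast; ring
  rw [e, Complex.norm_real, Real.norm_eq_abs, abs_of_nonneg (by positivity)]

private lemma coef_norm_le (n : ℕ) (c : ℝ) (hc : 0 ≤ c) (hc3 : c ≤ 3) :
    ‖2 * (n : ℂ) + (c : ℂ)‖ ≤ 2 * (n : ℝ) + 3 := by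
  rw [coef_norm_eq n c hc]; linarith

private lemma zpow_norm_le (u : ℂ) (hu : ‖u‖ < 1) {E : ℤ} {n : ℕ} (h : (n : ℤ) ≤ E) :
    ‖u ^ E‖ ≤ ‖u‖ ^ n := by
  have hE0 : 0 ≤ E := le_trans (by positivity) h
  have e : u ^ E = u ^ E.toNat := by rw [← zpow_natCast, Int.toNat_of_nonneg hE0]
  rw [e, norm_pow]
  exact pow_le_pow_of_le_one (norm_nonneg u) hu.le (by omega)

private lemma summable_lin_geom (c : ℝ) (hc : 0 ≤ c) (h1 : c < 1) (A B : ℝ) :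
    Summable (fun n : ℕ => (A * n + B) * c ^ n) := by
  have h : ‖c‖ < 1 := by rwa [Real.norm_eq_abs, abs_of_nonneg hc]
  have s1 := summable_pow_mul_geometric_of_norm_lt_one (R := ℝ) 1 h
  have s0 := summable_pow_mul_geometric_of_norm_lt_one (R := ℝ) 0 h
  refine ((s1.mul_left A).add (s0.mul_left B)).congr fun n => ?_
  simp only [pow_one, pow_zero, one_mul]
  ring

private lemma dom_of_exp (u : ℂ) (hu : ‖u‖ < 1) (E : ℕ → ℤ) (hE : ∀ n : ℕ, (n : ℤ) ≤ E n) :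
    Summable (fun n : ℕ => (2 * (n : ℝ) + 3) * ‖u ^ E n‖) := by
  refine Summable.of_nonneg_of_le (fun n => by positivity) (fun n => ?_)
    (summable_lin_geom ‖u‖ (norm_nonneg u) hu 2 3)
  exact mul_le_mul_of_nonneg_left (zpow_norm_le u hu (hE n)) (by positivity)

private lemma summable_norm_zpow (u : ℂ) (hu : ‖u‖ < 1) (E : ℕ → ℤ) (hE : ∀ n : ℕ, (n : ℤ) ≤ E n) :
    Summable (fun n : ℕ => ‖u ^ E n‖) := by
  refine (dom_of_exp u hu E hE).of_nonneg_of_le (fun n => norm_nonneg _) (fun n => ?_)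
  have h1 : (1:ℝ) ≤ 2 * (n : ℝ) + 3 := by have : (0:ℝ) ≤ (n:ℝ) := n.cast_nonneg; linarith
  exact le_mul_of_one_le_left (norm_nonneg _) h1

private lemma summable_norm_mul (u : ℂ) (hu : ‖u‖ < 1) (a : ℕ → ℂ) (E1 E2 : ℕ → ℤ)
    (h1 : ∀ n : ℕ, (n : ℤ) ≤ E1 n) (h2 : ∀ n : ℕ, (n : ℤ) ≤ E2 n)
    (ha : ∀ n, ‖a n‖ ≤ 2 * (n : ℝ) + 3) :
    Summable (fun n : ℕ => ‖a n * (u ^ E1 n - u ^ E2 n)‖) := by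
  refine Summable.of_nonneg_of_le (fun n => norm_nonneg _) (fun n => ?_)
    (summable_lin_geom ‖u‖ (norm_nonneg u) hu 4 6)
  have hb : (0:ℝ) ≤ 2 * (n : ℝ) + 3 := by positivity
  calc ‖a n * (u ^ E1 n - u ^ E2 n)‖
      ≤ (2 * (n : ℝ) + 3) * (‖u ^ E1 n‖ + ‖u ^ E2 n‖) := by
        rw [norm_mul]
        exact mul_le_mul (ha n) (norm_sub_le _ _) (norm_nonneg _) hb
    _ ≤ (2 * (n : ℝ) + 3) * (‖u‖ ^ n + ‖u‖ ^ n) :=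
        mul_le_mul_of_nonneg_left (add_le_add (zpow_norm_le u hu (h1 n)) (zpow_norm_le u hu (h2 n))) hb
    _ = (4 * (n : ℝ) + 6) * ‖u‖ ^ n := by ring

private lemma summable_coef (F : ℕ → ℂ) (hF : Summable (fun n : ℕ => (2 * (n : ℝ) + 3) * ‖F n‖))
    (a : ℕ → ℂ) (ha : ∀ n, ‖a n‖ ≤ 2 * (n : ℝ) + 3) : Summable (fun n => a n * F n) := by
  refine Summable.of_norm (Summable.of_nonneg_of_le (fun n => norm_nonneg _) (fun n => ?_) hF)
  rw [norm_mul]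
  exact mul_le_mul_of_nonneg_right (ha n) (norm_nonneg _)

private lemma shift_dom (F : ℕ → ℂ) (hF : Summable (fun n : ℕ => (2 * (n : ℝ) + 3) * ‖F n‖)) :
    Summable (fun n : ℕ => (2 * (n : ℝ) + 3) * ‖F (n + 1)‖) := by
  have h1 : Summable (fun n : ℕ => (2 * ((n + 1 : ℕ) : ℝ) + 3) * ‖F (n + 1)‖) :=
    (summable_nat_add_iff 1).mpr hF
  refine h1.of_nonneg_of_le (fun n => by positivity) (fun n => ?_)
  have h2 : (0:ℝ) ≤ ‖F (n+1)‖ := norm_nonneg _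
  have e : ((n + 1 : ℕ) : ℝ) = (n : ℝ) + 1 := by push_cast; ring
  rw [e]
  nlinarith

private lemma sum_one (F : ℕ → ℂ) (hF : Summable (fun n : ℕ => (2 * (n : ℝ) + 3) * ‖F n‖)) :
    Summable F := by
  have := summable_coef F hF (fun _ => 1) (fun n => by
    rw [norm_one]; have : (0:ℝ) ≤ (n:ℝ) := n.cast_nonneg; linarith)
  simpa using this

private lemma telescope (F : ℕ → ℂ) (hF : Summable (fun n : ℕ => (2 * (n : ℝ) + 3) * ‖F n‖)) :
    ∑' n : ℕ, ((2 * (n : ℂ) + 1) * F n - (2 * (n : ℂ) + 2) * F (n + 1)) = ∑' n : ℕ, F n := by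
  have hFs : Summable F := sum_one F hF
  have hA : Summable (fun n : ℕ => (2 * (n : ℂ) + 1) * F n) :=
    summable_coef F hF _ (fun n => by simpa using coef_norm_le n 1 (by norm_num) (by norm_num))
  have hB : Summable (fun n : ℕ => (2 * (n : ℂ) + 2) * F (n + 1)) :=
    summable_coef (fun n => F (n + 1)) (shift_dom F hF) _
      (fun n => by simpa using coef_norm_le n 2 (by norm_num) (by norm_num))
  have hg : Summable (fun n : ℕ => (2 * (n : ℂ) + 1) * F n - (2 * (n : ℂ) + 2) * F (n + 1)) :=
    hA.sub hB
  have key : ∀ N : ℕ, ∑ n ∈ Finset.range N, ((2 * (n : ℂ) + 1) * F n - (2 * (n : ℂ) + 2) * F (n + 1))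
      = (∑ n ∈ Finset.range N, F n) - 2 * (N : ℂ) * F N := by
    intro N
    induction N with
    | zero => simp
    | succ N ih =>
        rw [Finset.sum_range_succ, ih, Finset.sum_range_succ]
        push_cast
        ring
  have hlim : Tendsto (fun N : ℕ => 2 * (N : ℂ) * F N) atTop (𝓝 0) := by
    rw [tendsto_zero_iff_norm_tendsto_zero]
    have h0 : Tendsto (fun n : ℕ => (2 * (n : ℝ) + 3) * ‖F n‖) atTop (𝓝 0) :=
      hF.tendsto_atTop_zero
    refine squeeze_zero (fun n => norm_nonneg _) (fun n => ?_) h0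
    rw [norm_mul]
    refine mul_le_mul_of_nonneg_right ?_ (norm_nonneg _)
    simpa using coef_norm_le n 0 le_rfl (by norm_num)
  have t1 := hg.hasSum.tendsto_sum_nat
  have t2 : Tendsto (fun N : ℕ => (∑ n ∈ Finset.range N, F n) - 2 * (N : ℂ) * F N) atTop
      (𝓝 ((∑' n : ℕ, F n) - 0)) := (hFs.hasSum.tendsto_sum_nat).sub hlim
  rw [sub_zero] at t2
  exact tendsto_nhds_unique t1 ((tendsto_congr key).mpr t2)

private lemma case1 (F G : ℕ → ℂ)
    (hF : Summable (fun n : ℕ => (2 * (n : ℝ) + 3) * ‖F n‖))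
    (hG : Summable (fun n : ℕ => (2 * (n : ℝ) + 3) * ‖G n‖)) :
    (∑' n : ℕ, F n) + (∑' n : ℕ, G n)
      = (∑' n : ℕ, (2 * (n : ℂ) + 1) * (F n - G n))
        + ∑' n : ℕ, (2 * (n : ℂ) + 2) * (G n - F (n + 1)) := by
  have hFs := sum_one F hF
  have hGs := sum_one G hG
  have hA : Summable (fun n : ℕ => (2 * (n : ℂ) + 1) * F n) :=
    summable_coef F hF _ (fun n => by simpa using coef_norm_le n 1 (by norm_num) (by norm_num))
  have hB : Summable (fun n : ℕ => (2 * (n : ℂ) + 2) * F (n + 1)) :=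
    summable_coef (fun n => F (n + 1)) (shift_dom F hF) _
      (fun n => by simpa using coef_norm_le n 2 (by norm_num) (by norm_num))
  have hC : Summable (fun n : ℕ => (2 * (n : ℂ) + 1) * G n) :=
    summable_coef G hG _ (fun n => by simpa using coef_norm_le n 1 (by norm_num) (by norm_num))
  have hD : Summable (fun n : ℕ => (2 * (n : ℂ) + 2) * G n) :=
    summable_coef G hG _ (fun n => by simpa using coef_norm_le n 2 (by norm_num) (by norm_num))
  have e1 : (∑' n : ℕ, (2 * (n : ℂ) + 1) * (F n - G n))
      = (∑' n : ℕ, (2 * (n : ℂ) + 1) * F n) - ∑' n : ℕ, (2 * (n : ℂ) + 1) * G n := by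
    rw [tsum_congr (fun n : ℕ => mul_sub (2 * (n : ℂ) + 1) (F n) (G n)), Summable.tsum_sub hA hC]
  have e2 : (∑' n : ℕ, (2 * (n : ℂ) + 2) * (G n - F (n + 1)))
      = (∑' n : ℕ, (2 * (n : ℂ) + 2) * G n) - ∑' n : ℕ, (2 * (n : ℂ) + 2) * F (n + 1) := by
    rw [tsum_congr (fun n : ℕ => mul_sub (2 * (n : ℂ) + 2) (G n) (F (n + 1))), Summable.tsum_sub hD hB]
  have e3 : (∑' n : ℕ, (2 * (n : ℂ) + 1) * F n) - (∑' n : ℕ, (2 * (n : ℂ) + 2) * F (n + 1))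
      = ∑' n : ℕ, F n := by
    rw [← Summable.tsum_sub hA hB]
    exact telescope F hF
  have e4 : (∑' n : ℕ, (2 * (n : ℂ) + 2) * G n)
      = (∑' n : ℕ, (2 * (n : ℂ) + 1) * G n) + ∑' n : ℕ, G n := by
    rw [← Summable.tsum_add hC hGs]
    exact tsum_congr (fun n : ℕ => by ring)
  rw [e1, e2]
  linear_combination -e3 - e4

private lemma case2 (F G : ℕ → ℂ)
    (hF : Summable (fun n : ℕ => (2 * (n : ℝ) + 3) * ‖F n‖))
    (hG : Summable (fun n : ℕ => (2 * (n : ℝ) + 3) * ‖G n‖)) :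
    (∑' n : ℕ, F n) + (∑' n : ℕ, G n)
      = (∑' n : ℕ, (2 * (n : ℂ) + 2) * (F n - G (n + 1)))
        + ∑' n : ℕ, (2 * (n : ℂ) + 1) * (G n - F n) := by
  have hFs := sum_one F hF
  have hGs := sum_one G hG
  have hA : Summable (fun n : ℕ => (2 * (n : ℂ) + 2) * F n) :=
    summable_coef F hF _ (fun n => by simpa using coef_norm_le n 2 (by norm_num) (by norm_num))
  have hD : Summable (fun n : ℕ => (2 * (n : ℂ) + 1) * F n) :=
    summable_coef F hF _ (fun n => by simpa using coef_norm_le n 1 (by norm_num) (by norm_num))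
  have hC : Summable (fun n : ℕ => (2 * (n : ℂ) + 1) * G n) :=
    summable_coef G hG _ (fun n => by simpa using coef_norm_le n 1 (by norm_num) (by norm_num))
  have hB : Summable (fun n : ℕ => (2 * (n : ℂ) + 2) * G (n + 1)) :=
    summable_coef (fun n => G (n + 1)) (shift_dom G hG) _
      (fun n => by simpa using coef_norm_le n 2 (by norm_num) (by norm_num))
  have e1 : (∑' n : ℕ, (2 * (n : ℂ) + 2) * (F n - G (n + 1)))
      = (∑' n : ℕ, (2 * (n : ℂ) + 2) * F n) - ∑' n : ℕ, (2 * (n : ℂ) + 2) * G (n + 1) := by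
    rw [tsum_congr (fun n : ℕ => mul_sub (2 * (n : ℂ) + 2) (F n) (G (n + 1))), Summable.tsum_sub hA hB]
  have e2 : (∑' n : ℕ, (2 * (n : ℂ) + 1) * (G n - F n))
      = (∑' n : ℕ, (2 * (n : ℂ) + 1) * G n) - ∑' n : ℕ, (2 * (n : ℂ) + 1) * F n := by
    rw [tsum_congr (fun n : ℕ => mul_sub (2 * (n : ℂ) + 1) (G n) (F n)), Summable.tsum_sub hC hD]
  have e3 : (∑' n : ℕ, (2 * (n : ℂ) + 1) * G n) - (∑' n : ℕ, (2 * (n : ℂ) + 2) * G (n + 1))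
      = ∑' n : ℕ, G n := by
    rw [← Summable.tsum_sub hC hB]
    exact telescope G hG
  have e4 : (∑' n : ℕ, (2 * (n : ℂ) + 2) * F n)
      = (∑' n : ℕ, (2 * (n : ℂ) + 1) * F n) + ∑' n : ℕ, F n := by
    rw [← Summable.tsum_add hD hFs]
    exact tsum_congr (fun n : ℕ => by ring)
  rw [e1, e2]
  linear_combination -e3 - e4

private lemma exp_bound1 (p s : ℤ) (hp : 2 ≤ p) (hs1 : 1 ≤ s) (hs2 : s ≤ p - 1)
    (n k : ℤ) (hn : 0 ≤ n) (hk : n ≤ k) : n ≤ (k * p + s) ^ 2 := by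
  have hk0 : 0 ≤ k := le_trans hn hk
  have h1 : 2 * k + 1 ≤ k * p + s := by nlinarith [mul_nonneg hk0 (by linarith : (0:ℤ) ≤ p - 2)]
  have hd : (1:ℤ) ≤ k * p + s := by linarith
  nlinarith [mul_le_mul h1 h1 (by linarith) (by linarith : (0:ℤ) ≤ k * p + s)]

private lemma exp_bound2 (p s : ℤ) (hp : 2 ≤ p) (hs1 : 1 ≤ s) (hs2 : s ≤ p - 1)
    (n k : ℤ) (hn : 0 ≤ n) (hk : n + 1 ≤ k) : n ≤ (k * p - s) ^ 2 := by
  have hk1 : 1 ≤ k := by linarith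
  have h1 : 2 * k - 1 ≤ k * p - s := by
    nlinarith [mul_nonneg (by linarith : (0:ℤ) ≤ k - 1) (by linarith : (0:ℤ) ≤ p - 2)]
  have hd : (1:ℤ) ≤ k * p - s := by linarith
  nlinarith [mul_le_mul h1 h1 (by linarith) (by linarith : (0:ℤ) ≤ k * p - s)]


/-- Character form of the short exact sequence `0 → W_{r,s} → V_{[α_{r,s}]} → W_{3−r,p−s} → 0`:
`Σ_{n∈ℤ} u^{((r+2n)p−s)²}
   = Σ_{n≥0} (2n+r)(u^{((2n+r)p−s)²} − u^{((2n+r)p+s)²})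
   + Σ_{n≥0} (2n+3−r)(u^{((2n+3−r)p−(p−s))²} − u^{((2n+3−r)p+(p−s))²})`,
all series converging absolutely, for `p ≥ 2`, `1 ≤ s ≤ p−1`, `r ∈ {1,2}` and `|u| < 1`. -/
theorem stmt_4 (p s r : ℤ) (hp : 2 ≤ p) (hs1 : 1 ≤ s) (hs2 : s ≤ p - 1)
    (hr : r = 1 ∨ r = 2) (u : ℂ) (hu : ‖u‖ < 1) :
    Summable (fun n : ℤ => ‖u ^ (((r + 2 * n) * p - s) ^ 2)‖) ∧
    Summable (fun n : ℕ => ‖(2 * (n : ℂ) + (r : ℂ)) *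
        (u ^ (((2 * (n : ℤ) + r) * p - s) ^ 2)
          - u ^ (((2 * (n : ℤ) + r) * p + s) ^ 2))‖) ∧
    Summable (fun n : ℕ => ‖(2 * (n : ℂ) + 3 - (r : ℂ)) *
        (u ^ (((2 * (n : ℤ) + 3 - r) * p - (p - s)) ^ 2)
          - u ^ (((2 * (n : ℤ) + 3 - r) * p + (p - s)) ^ 2))‖) ∧
    (∑' n : ℤ, u ^ (((r + 2 * n) * p - s) ^ 2))
      = (∑' n : ℕ, (2 * (n : ℂ) + (r : ℂ)) *
            (u ^ (((2 * (n : ℤ) + r) * p - s) ^ 2)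
              - u ^ (((2 * (n : ℤ) + r) * p + s) ^ 2)))
        + ∑' n : ℕ, (2 * (n : ℂ) + 3 - (r : ℂ)) *
            (u ^ (((2 * (n : ℤ) + 3 - r) * p - (p - s)) ^ 2)
              - u ^ (((2 * (n : ℤ) + 3 - r) * p + (p - s)) ^ 2)) := by
  rcases hr with rfl | rfl
  · -- r = 1
    have hEF : ∀ n : ℕ, (n : ℤ) ≤ ((2 * (n:ℤ) + 1) * p - s) ^ 2 := fun n =>
      exp_bound2 p s hp hs1 hs2 n (2 * (n:ℤ) + 1) (Int.natCast_nonneg n) (by omega)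
    have hEG : ∀ n : ℕ, (n : ℤ) ≤ ((2 * (n:ℤ) + 1) * p + s) ^ 2 := fun n =>
      exp_bound1 p s hp hs1 hs2 n (2 * (n:ℤ) + 1) (Int.natCast_nonneg n) (by omega)
    have hE1 : ∀ n : ℕ, (n : ℤ) ≤ ((1 + 2 * (n:ℤ)) * p - s) ^ 2 := fun n => by
      rw [show ((1 + 2 * (n:ℤ)) * p - s) ^ 2 = ((2 * (n:ℤ) + 1) * p - s) ^ 2 from by ring]
      exact hEF n
    have hE2 : ∀ n : ℕ, (n : ℤ) ≤ ((1 + 2 * -((n:ℤ) + 1)) * p - s) ^ 2 := fun n => by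
      rw [show ((1 + 2 * -((n:ℤ) + 1)) * p - s) ^ 2 = ((2 * (n:ℤ) + 1) * p + s) ^ 2 from by ring]
      exact hEG n
    have hE3 : ∀ n : ℕ, (n : ℤ) ≤ ((2 * (n:ℤ) + 3 - 1) * p - (p - s)) ^ 2 := fun n => by
      rw [show ((2 * (n:ℤ) + 3 - 1) * p - (p - s)) ^ 2 = ((2 * (n:ℤ) + 1) * p + s) ^ 2 from by ring]
      exact hEG n
    have hE4 : ∀ n : ℕ, (n : ℤ) ≤ ((2 * (n:ℤ) + 3 - 1) * p + (p - s)) ^ 2 := fun n => by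
      rw [show ((2 * (n:ℤ) + 3 - 1) * p + (p - s)) ^ 2 = ((2 * ((n:ℤ) + 1) + 1) * p - s) ^ 2
        from by ring]
      exact exp_bound2 p s hp hs1 hs2 n (2 * ((n:ℤ) + 1) + 1) (Int.natCast_nonneg n) (by omega)
    have ha1 : ∀ n : ℕ, ‖2 * (n:ℂ) + ((1:ℤ):ℂ)‖ ≤ 2 * (n:ℝ) + 3 := fun n => by
      simpa using coef_norm_le n 1 (by norm_num) (by norm_num)
    have ha2 : ∀ n : ℕ, ‖2 * (n:ℂ) + 3 - ((1:ℤ):ℂ)‖ ≤ 2 * (n:ℝ) + 3 := fun n => by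
      rw [show 2 * (n:ℂ) + 3 - ((1:ℤ):ℂ) = 2 * (n:ℂ) + ((2:ℝ):ℂ) from by push_cast; ring]
      exact coef_norm_le n 2 (by norm_num) (by norm_num)
    refine ⟨?_, ?_, ?_, ?_⟩
    · exact Summable.of_nat_of_neg_add_one
        (summable_norm_zpow u hu _ hE1) (summable_norm_zpow u hu _ hE2)
    · exact summable_norm_mul u hu _ _ _ hEF hEG ha1
    · exact summable_norm_mul u hu _ _ _ hE3 hE4 ha2
    · have domF := dom_of_exp u hu (fun n : ℕ => ((2 * (n:ℤ) + 1) * p - s) ^ 2) hEF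
      have domG := dom_of_exp u hu (fun n : ℕ => ((2 * (n:ℤ) + 1) * p + s) ^ 2) hEG
      have hf1 : Summable (fun n : ℕ => u ^ (((1 + 2 * (n:ℤ)) * p - s) ^ 2)) :=
        (summable_norm_zpow u hu _ hE1).of_norm
      have hf2 : Summable (fun n : ℕ => u ^ (((1 + 2 * -((n:ℤ) + 1)) * p - s) ^ 2)) :=
        (summable_norm_zpow u hu _ hE2).of_norm
      rw [tsum_of_nat_of_neg_add_one
        (f := fun n : ℤ => u ^ (((1 + 2 * n) * p - s) ^ 2)) hf1 hf2]
      beta_reduce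
      have eqL1 : (∑' n : ℕ, u ^ (((1 + 2 * (n:ℤ)) * p - s) ^ 2))
          = ∑' n : ℕ, u ^ (((2 * (n:ℤ) + 1) * p - s) ^ 2) :=
        tsum_congr (fun n : ℕ => by
          rw [show ((1 + 2 * (n:ℤ)) * p - s) ^ 2 = ((2 * (n:ℤ) + 1) * p - s) ^ 2 from by ring])
      have eqL2 : (∑' n : ℕ, u ^ (((1 + 2 * -((n:ℤ) + 1)) * p - s) ^ 2))
          = ∑' n : ℕ, u ^ (((2 * (n:ℤ) + 1) * p + s) ^ 2) :=
        tsum_congr (fun n : ℕ => by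
          rw [show ((1 + 2 * -((n:ℤ) + 1)) * p - s) ^ 2 = ((2 * (n:ℤ) + 1) * p + s) ^ 2
            from by ring])
      have eqR1 : (∑' n : ℕ, (2 * (n:ℂ) + ((1:ℤ):ℂ)) *
              (u ^ (((2 * (n:ℤ) + 1) * p - s) ^ 2) - u ^ (((2 * (n:ℤ) + 1) * p + s) ^ 2)))
          = ∑' n : ℕ, (2 * (n:ℂ) + 1) *
              (u ^ (((2 * (n:ℤ) + 1) * p - s) ^ 2) - u ^ (((2 * (n:ℤ) + 1) * p + s) ^ 2)) :=
        tsum_congr (fun n : ℕ => by norm_num)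
      have eqR2 : (∑' n : ℕ, (2 * (n:ℂ) + 3 - ((1:ℤ):ℂ)) *
              (u ^ (((2 * (n:ℤ) + 3 - 1) * p - (p - s)) ^ 2)
                - u ^ (((2 * (n:ℤ) + 3 - 1) * p + (p - s)) ^ 2)))
          = ∑' n : ℕ, (2 * (n:ℂ) + 2) *
              (u ^ (((2 * (n:ℤ) + 1) * p + s) ^ 2)
                - u ^ (((2 * ((n + 1 : ℕ):ℤ) + 1) * p - s) ^ 2)) := by
        refine tsum_congr (fun n : ℕ => ?_)
        rw [show ((2 * (n:ℤ) + 3 - 1) * p - (p - s)) ^ 2 = ((2 * (n:ℤ) + 1) * p + s) ^ 2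
              from by ring,
            show ((2 * (n:ℤ) + 3 - 1) * p + (p - s)) ^ 2
                = ((2 * ((n + 1 : ℕ):ℤ) + 1) * p - s) ^ 2 from by push_cast; ring,
            show (2 * (n:ℂ) + 3 - ((1:ℤ):ℂ)) = 2 * (n:ℂ) + 2 from by push_cast; ring]
      rw [eqL1, eqL2, eqR1, eqR2]
      exact case1 (fun n : ℕ => u ^ (((2 * (n:ℤ) + 1) * p - s) ^ 2))
        (fun n : ℕ => u ^ (((2 * (n:ℤ) + 1) * p + s) ^ 2)) domF domG
  · -- r = 2
    have hEF : ∀ n : ℕ, (n : ℤ) ≤ ((2 * (n:ℤ) + 2) * p - s) ^ 2 := fun n =>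
      exp_bound2 p s hp hs1 hs2 n (2 * (n:ℤ) + 2) (Int.natCast_nonneg n) (by omega)
    have hEG : ∀ n : ℕ, (n : ℤ) ≤ (2 * (n:ℤ) * p + s) ^ 2 := fun n => by
      rw [show (2 * (n:ℤ) * p + s) ^ 2 = ((2 * (n:ℤ)) * p + s) ^ 2 from by ring]
      exact exp_bound1 p s hp hs1 hs2 n (2 * (n:ℤ)) (Int.natCast_nonneg n) (by omega)
    have hE1 : ∀ n : ℕ, (n : ℤ) ≤ ((2 + 2 * (n:ℤ)) * p - s) ^ 2 := fun n => by
      rw [show ((2 + 2 * (n:ℤ)) * p - s) ^ 2 = ((2 * (n:ℤ) + 2) * p - s) ^ 2 from by ring]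
      exact hEF n
    have hE2 : ∀ n : ℕ, (n : ℤ) ≤ ((2 + 2 * -((n:ℤ) + 1)) * p - s) ^ 2 := fun n => by
      rw [show ((2 + 2 * -((n:ℤ) + 1)) * p - s) ^ 2 = (2 * (n:ℤ) * p + s) ^ 2 from by ring]
      exact hEG n
    have hE3 : ∀ n : ℕ, (n : ℤ) ≤ ((2 * (n:ℤ) + 3 - 2) * p - (p - s)) ^ 2 := fun n => by
      rw [show ((2 * (n:ℤ) + 3 - 2) * p - (p - s)) ^ 2 = (2 * (n:ℤ) * p + s) ^ 2 from by ring]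
      exact hEG n
    have hE4 : ∀ n : ℕ, (n : ℤ) ≤ ((2 * (n:ℤ) + 3 - 2) * p + (p - s)) ^ 2 := fun n => by
      rw [show ((2 * (n:ℤ) + 3 - 2) * p + (p - s)) ^ 2 = ((2 * (n:ℤ) + 2) * p - s) ^ 2
        from by ring]
      exact hEF n
    have hEG1 : ∀ n : ℕ, (n : ℤ) ≤ ((2 * (n:ℤ) + 2) * p + s) ^ 2 := fun n =>
      exp_bound1 p s hp hs1 hs2 n (2 * (n:ℤ) + 2) (Int.natCast_nonneg n) (by omega)
    have ha1 : ∀ n : ℕ, ‖2 * (n:ℂ) + ((2:ℤ):ℂ)‖ ≤ 2 * (n:ℝ) + 3 := fun n => by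
      simpa using coef_norm_le n 2 (by norm_num) (by norm_num)
    have ha2 : ∀ n : ℕ, ‖2 * (n:ℂ) + 3 - ((2:ℤ):ℂ)‖ ≤ 2 * (n:ℝ) + 3 := fun n => by
      rw [show 2 * (n:ℂ) + 3 - ((2:ℤ):ℂ) = 2 * (n:ℂ) + ((1:ℝ):ℂ) from by push_cast; ring]
      exact coef_norm_le n 1 (by norm_num) (by norm_num)
    refine ⟨?_, ?_, ?_, ?_⟩
    · exact Summable.of_nat_of_neg_add_one
        (summable_norm_zpow u hu _ hE1) (summable_norm_zpow u hu _ hE2)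
    · exact summable_norm_mul u hu _ _ _ hEF hEG1 ha1
    · exact summable_norm_mul u hu _ _ _ hE3 hE4 ha2
    · have domF := dom_of_exp u hu (fun n : ℕ => ((2 * (n:ℤ) + 2) * p - s) ^ 2) hEF
      have domG := dom_of_exp u hu (fun n : ℕ => (2 * (n:ℤ) * p + s) ^ 2) hEG
      have hf1 : Summable (fun n : ℕ => u ^ (((2 + 2 * (n:ℤ)) * p - s) ^ 2)) :=
        (summable_norm_zpow u hu _ hE1).of_norm
      have hf2 : Summable (fun n : ℕ => u ^ (((2 + 2 * -((n:ℤ) + 1)) * p - s) ^ 2)) :=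
        (summable_norm_zpow u hu _ hE2).of_norm
      rw [tsum_of_nat_of_neg_add_one
        (f := fun n : ℤ => u ^ (((2 + 2 * n) * p - s) ^ 2)) hf1 hf2]
      beta_reduce
      have eqL1 : (∑' n : ℕ, u ^ (((2 + 2 * (n:ℤ)) * p - s) ^ 2))
          = ∑' n : ℕ, u ^ (((2 * (n:ℤ) + 2) * p - s) ^ 2) :=
        tsum_congr (fun n : ℕ => by
          rw [show ((2 + 2 * (n:ℤ)) * p - s) ^ 2 = ((2 * (n:ℤ) + 2) * p - s) ^ 2 from by ring])
      have eqL2 : (∑' n : ℕ, u ^ (((2 + 2 * -((n:ℤ) + 1)) * p - s) ^ 2))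
          = ∑' n : ℕ, u ^ ((2 * (n:ℤ) * p + s) ^ 2) :=
        tsum_congr (fun n : ℕ => by
          rw [show ((2 + 2 * -((n:ℤ) + 1)) * p - s) ^ 2 = (2 * (n:ℤ) * p + s) ^ 2 from by ring])
      have eqR1 : (∑' n : ℕ, (2 * (n:ℂ) + ((2:ℤ):ℂ)) *
              (u ^ (((2 * (n:ℤ) + 2) * p - s) ^ 2) - u ^ (((2 * (n:ℤ) + 2) * p + s) ^ 2)))
          = ∑' n : ℕ, (2 * (n:ℂ) + 2) *
              (u ^ (((2 * (n:ℤ) + 2) * p - s) ^ 2)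
                - u ^ ((2 * ((n + 1 : ℕ):ℤ) * p + s) ^ 2)) := by
        refine tsum_congr (fun n : ℕ => ?_)
        rw [show ((2 * (n:ℤ) + 2) * p + s) ^ 2 = (2 * ((n + 1 : ℕ):ℤ) * p + s) ^ 2
              from by push_cast; ring,
            show (2 * (n:ℂ) + ((2:ℤ):ℂ)) = 2 * (n:ℂ) + 2 from by push_cast; ring]
      have eqR2 : (∑' n : ℕ, (2 * (n:ℂ) + 3 - ((2:ℤ):ℂ)) *
              (u ^ (((2 * (n:ℤ) + 3 - 2) * p - (p - s)) ^ 2)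
                - u ^ (((2 * (n:ℤ) + 3 - 2) * p + (p - s)) ^ 2)))
          = ∑' n : ℕ, (2 * (n:ℂ) + 1) *
              (u ^ ((2 * (n:ℤ) * p + s) ^ 2) - u ^ (((2 * (n:ℤ) + 2) * p - s) ^ 2)) := by
        refine tsum_congr (fun n : ℕ => ?_)
        rw [show ((2 * (n:ℤ) + 3 - 2) * p - (p - s)) ^ 2 = (2 * (n:ℤ) * p + s) ^ 2
              from by ring,
            show ((2 * (n:ℤ) + 3 - 2) * p + (p - s)) ^ 2 = ((2 * (n:ℤ) + 2) * p - s) ^ 2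
              from by ring,
            show (2 * (n:ℂ) + 3 - ((2:ℤ):ℂ)) = 2 * (n:ℂ) + 1 from by push_cast; ring]
      rw [eqL1, eqL2, eqR1, eqR2]
      exact case2 (fun n : ℕ => u ^ (((2 * (n:ℤ) + 2) * p - s) ^ 2))
        (fun n : ℕ => u ^ ((2 * (n:ℤ) * p + s) ^ 2)) domF domG
end

section
/- Let p and s be integers with p ≥ 2 and 1 ≤ s ≤ p−1, let r ∈ {1,2}, and let u be a complex number with |u| < 1. For each integer k set R_k = max(r+2k, 2−r−2k). Then Σ_{k∈ℤ} Σ_{n=0}^∞ (u^{((R_k+2n)p−s)²} − u^{((R_k+2n)p+s)²}) = Σ_{n=0}^∞ (2n+r)(u^{((2n+r)p−s)²} − u^{((2n+r)p+s)²}), the double series on the left converging absolutely. -/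
private noncomputable def fterm (p s : ℤ) (u : ℂ) (m : ℤ) : ℂ :=
  u ^ ((m * p - s) ^ 2) - u ^ ((m * p + s) ^ 2)

private lemma fterm_norm_le (p s : ℤ) (u : ℂ) (hp : 2 ≤ p) (hs1 : 1 ≤ s) (hs2 : s ≤ p - 1)
    (hu : ‖u‖ < 1) (m : ℤ) (hm : 1 ≤ m) :
    ‖fterm p s u m‖ ≤ 2 * ‖u‖ ^ m.toNat := by
  have key : ∀ E : ℤ, m ≤ E → ‖u ^ E‖ ≤ ‖u‖ ^ m.toNat := by
    intro E hE
    have hE0 : 0 ≤ E := le_trans (by omega) hE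
    rw [norm_zpow, show E = (E.toNat : ℤ) from (Int.toNat_of_nonneg hE0).symm, zpow_natCast]
    exact pow_le_pow_of_le_one (norm_nonneg u) hu.le (by omega)
  have hmp : m ≤ m * p - s := by
    nlinarith [mul_le_mul_of_nonneg_right (show (1:ℤ) ≤ m by omega)
      (show (0:ℤ) ≤ p - 1 by omega)]
  have h1 : m ≤ (m * p - s) ^ 2 := by nlinarith
  have h2 : m ≤ (m * p + s) ^ 2 := by nlinarith
  calc ‖fterm p s u m‖ ≤ ‖u ^ ((m*p - s)^2)‖ + ‖u ^ ((m*p + s)^2)‖ := norm_sub_le _ _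
    _ ≤ ‖u‖ ^ m.toNat + ‖u‖ ^ m.toNat := add_le_add (key _ h1) (key _ h2)
    _ = 2 * ‖u‖ ^ m.toNat := by ring

private lemma max_eq_aux (r k : ℤ) :
    max (r + 2 * k) (2 - r - 2 * k) = 2 * max k (1 - r - k) + r := by
  rcases le_total k (1 - r - k) with h | h
  · rw [max_eq_right (by omega), max_eq_right h]; ring
  · rw [max_eq_left (by omega), max_eq_left h]; ring

private lemma summable_aux (p s r : ℤ) (hp : 2 ≤ p) (hs1 : 1 ≤ s) (hs2 : s ≤ p - 1)
    (hr : r = 1 ∨ r = 2) (u : ℂ) (hu : ‖u‖ < 1) :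
    Summable (fun q : ℤ × ℕ =>
      ‖fterm p s u (max (r + 2 * q.1) (2 - r - 2 * q.1) + 2 * (q.2 : ℤ))‖) := by
  have hgeo : Summable (fun n : ℕ => ‖u‖ ^ n) := summable_geometric_of_lt_one (norm_nonneg u) hu
  have hZ : Summable (fun k : ℤ => ‖u‖ ^ k.natAbs) := by
    apply Summable.of_nat_of_neg <;> simpa using hgeo
  have hmaj : Summable (fun q : ℤ × ℕ => ‖u‖ ^ q.1.natAbs * ‖u‖ ^ q.2) :=
    hZ.mul_of_nonneg hgeo (fun _ => pow_nonneg (norm_nonneg u) _)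
      (fun _ => pow_nonneg (norm_nonneg u) _)
  apply Summable.of_nonneg_of_le (fun q => norm_nonneg _) _ (hmaj.mul_left 2)
  rintro ⟨k, n⟩
  have h1 := le_max_left k (1 - r - k)
  have h2 := le_max_right k (1 - r - k)
  set t := max k (1 - r - k) with ht
  have hm1 : 1 ≤ max (r + 2 * k) (2 - r - 2 * k) + 2 * (n : ℤ) := by
    rw [max_eq_aux]; rcases hr with rfl | rfl <;> omega
  refine le_trans (fterm_norm_le p s u hp hs1 hs2 hu _ hm1) ?_
  rw [mul_le_mul_iff_right₀ (by norm_num : (0:ℝ) < 2), ← pow_add]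
  apply pow_le_pow_of_le_one (norm_nonneg u) hu.le
  rw [max_eq_aux]
  rcases hr with rfl | rfl <;> omega

private lemma fiber_tsum (p s r : ℤ) (hr : r = 1 ∨ r = 2) (u : ℂ) (F : ℤ × ℕ → ℂ)
    (hF : ∀ q : ℤ × ℕ, F q = fterm p s u (max (r + 2 * q.1) (2 - r - 2 * q.1) + 2 * (q.2 : ℤ)))
    (m : ℕ) :
    ∑' q : ((fun q : ℤ × ℕ => (max q.1 (1 - r - q.1)).toNat + q.2) ⁻¹' {m}), F q
    = (2 * (m : ℂ) + (r : ℂ)) * fterm p s u (2 * (m : ℤ) + r) := by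
  classical
  set S : Finset (ℤ × ℕ) :=
    (Finset.Icc (1 - r - (m : ℤ)) (m : ℤ)).image
      (fun k => (k, m - (max k (1 - r - k)).toNat)) with hS
  have hset : ((fun q : ℤ × ℕ => (max q.1 (1 - r - q.1)).toNat + q.2) ⁻¹' {m}) = ↑S := by
    ext ⟨k, n⟩
    have h1 := le_max_left k (1 - r - k)
    have h2 := le_max_right k (1 - r - k)
    simp only [hS, Set.mem_preimage, Set.mem_singleton_iff, Finset.coe_image, Set.mem_image,
      Finset.mem_coe, Finset.mem_Icc, Prod.mk.injEq]
    constructor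
    · rintro h
      exact ⟨k, by omega, rfl, by omega⟩
    · rintro ⟨a, ha, rfl, rfl⟩
      omega
  rw [hset, Finset.tsum_subtype' S F]
  have hval : ∀ q ∈ S, F q = fterm p s u (2 * (m : ℤ) + r) := by
    rintro q hq
    simp only [hS, Finset.mem_image, Finset.mem_Icc] at hq
    obtain ⟨k, hk, rfl⟩ := hq
    have h1 := le_max_left k (1 - r - k)
    have h2 := le_max_right k (1 - r - k)
    rw [hF]
    congr 1
    rw [max_eq_aux]
    push_cast [Int.toNat_of_nonneg]
    omega
  rw [Finset.sum_congr rfl hval, Finset.sum_const]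
  have hcard : S.card = (2 * m + r).toNat := by
    rw [hS, Finset.card_image_of_injective _ (fun a b h => by simpa using (Prod.ext_iff.1 h).1),
      Int.card_Icc]
    omega
  rw [hcard, nsmul_eq_mul]
  congr 1
  have h3 : ((2 * (m : ℤ) + r).toNat : ℤ) = 2 * (m : ℤ) + r :=
    Int.toNat_of_nonneg (by rcases hr with rfl | rfl <;> omega)
  have h4 : (2 * m + r).toNat = (2 * (m : ℤ) + r).toNat := by omega
  rw [h4, ← Int.cast_natCast (R := ℂ), h3]
  push_cast
  ring

/-- Character form of the decomposition `W_{r,s} = ⊕_{k∈ℤ} M_{2k+r,s}`: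
with `R_k = max(r+2k, 2−r−2k)`,
`Σ_{k∈ℤ} Σ_{n≥0} (u^{((R_k+2n)p−s)²} − u^{((R_k+2n)p+s)²})
   = Σ_{n≥0} (2n+r)(u^{((2n+r)p−s)²} − u^{((2n+r)p+s)²})`,
the double series on the left converging absolutely, for `p ≥ 2`, `1 ≤ s ≤ p−1`,
`r ∈ {1,2}` and `|u| < 1`. -/
theorem stmt_5 (p s r : ℤ) (hp : 2 ≤ p) (hs1 : 1 ≤ s) (hs2 : s ≤ p - 1)
    (hr : r = 1 ∨ r = 2) (u : ℂ) (hu : ‖u‖ < 1) :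
    Summable (fun q : ℤ × ℕ =>
        ‖u ^ (((max (r + 2 * q.1) (2 - r - 2 * q.1) + 2 * (q.2 : ℤ)) * p - s) ^ 2)
          - u ^ (((max (r + 2 * q.1) (2 - r - 2 * q.1) + 2 * (q.2 : ℤ)) * p + s) ^ 2)‖) ∧
    (∑' k : ℤ, ∑' n : ℕ,
        (u ^ (((max (r + 2 * k) (2 - r - 2 * k) + 2 * (n : ℤ)) * p - s) ^ 2)
          - u ^ (((max (r + 2 * k) (2 - r - 2 * k) + 2 * (n : ℤ)) * p + s) ^ 2)))
      = ∑' n : ℕ, (2 * (n : ℂ) + (r : ℂ)) *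
          (u ^ (((2 * (n : ℤ) + r) * p - s) ^ 2)
            - u ^ (((2 * (n : ℤ) + r) * p + s) ^ 2)) := by
  have hsum := summable_aux p s r hp hs1 hs2 hr u hu
  refine ⟨hsum, ?_⟩
  set F : ℤ × ℕ → ℂ := fun q =>
    fterm p s u (max (r + 2 * q.1) (2 - r - 2 * q.1) + 2 * (q.2 : ℤ)) with hFdef
  have hF : Summable F := Summable.of_norm hsum
  have step1 : (∑' k : ℤ, ∑' n : ℕ, F (k, n)) = ∑' q : ℤ × ℕ, F q :=
    (Summable.tsum_prod' hF (fun b => hF.prod_factor b)).symm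
  have step2 := (hF.hasSum.tsum_fiberwise
    (fun q : ℤ × ℕ => (max q.1 (1 - r - q.1)).toNat + q.2)).tsum_eq
  calc (∑' k : ℤ, ∑' n : ℕ, F (k, n))
      = ∑' q : ℤ × ℕ, F q := step1
    _ = ∑' m : ℕ, ∑' q : ((fun q : ℤ × ℕ =>
          (max q.1 (1 - r - q.1)).toNat + q.2) ⁻¹' {m}), F q := step2.symm
    _ = ∑' m : ℕ, (2 * (m : ℂ) + (r : ℂ)) * fterm p s u (2 * (m : ℤ) + r) :=
        tsum_congr (fun m => fiber_tsum p s r hr u F (fun q => rfl) m)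
end

section
/- Let N be an integer, set R = max(N, 2−N), and let u be a complex number with |u| < 1. Then Σ_{ℓ=0}^∞ (−1)^ℓ u^{(2N+2ℓ−1)²} = Σ_{m=0}^∞ (u^{(2(R+2m)−1)²} − u^{(2(R+2m)+1)²}), both series converging absolutely. -/
private lemma aux_sum (u : ℂ) (hu : ‖u‖ < 1) (c : ℤ) (hc : Odd c) :
    Summable (fun l : ℕ => ‖u‖ ^ ((c + 2 * (l : ℤ)) ^ 2)) := by
  rcases eq_or_lt_of_le (norm_nonneg u) with h0 | h0
  · have hz : ∀ l : ℕ, ‖u‖ ^ ((c + 2 * (l : ℤ)) ^ 2) = 0 := by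
      intro l
      rw [← h0]
      refine zero_zpow _ (pow_ne_zero 2 ?_)
      rcases hc with ⟨k, hk⟩; omega
    exact summable_zero.congr (fun l => (hz l).symm)
  · set x := ‖u‖ with hx
    set K : ℕ := (1 - c).toNat with hK
    rw [← summable_nat_add_iff K]
    refine Summable.of_nonneg_of_le (fun l => zpow_nonneg h0.le _) (fun l => ?_)
      (summable_geometric_of_lt_one h0.le hu)
    have he : (l : ℤ) ≤ (c + 2 * ((l + K : ℕ) : ℤ)) ^ 2 := by
      have h1 : (l : ℤ) + 1 ≤ c + 2 * ((l + K : ℕ) : ℤ) := by push_cast; omega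
      nlinarith [sq_nonneg (c + 2 * ((l + K : ℕ) : ℤ) - 1)]
    calc x ^ ((c + 2 * ((l + K : ℕ) : ℤ)) ^ 2) ≤ x ^ (l : ℤ) :=
          zpow_le_zpow_right_of_le_one₀ h0 hu.le he
      _ = x ^ l := zpow_natCast x l

private lemma pair_sum (u : ℂ) (hu : ‖u‖ < 1) (R : ℤ) :
    (∑' l : ℕ, (-1 : ℂ) ^ l * u ^ ((2 * R + 2 * (l : ℤ) - 1) ^ 2))
      = ∑' m : ℕ, (u ^ ((2 * (R + 2 * (m : ℤ)) - 1) ^ 2)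
          - u ^ ((2 * (R + 2 * (m : ℤ)) + 1) ^ 2)) := by
  set f : ℕ → ℂ := fun l => (-1 : ℂ) ^ l * u ^ ((2 * R + 2 * (l : ℤ) - 1) ^ 2) with hf
  have hnorm : ∀ l : ℕ, ‖f l‖ = ‖u‖ ^ ((2 * R - 1 + 2 * (l : ℤ)) ^ 2) := by
    intro l
    rw [hf]
    simp only [norm_mul, norm_pow, norm_neg, norm_one, one_pow, one_mul, norm_zpow]
    congr 1; ring
  have hsf : Summable f :=
    Summable.of_norm (((aux_sum u hu (2 * R - 1) ⟨R - 1, by ring⟩)).congr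
      (fun l => (hnorm l).symm))
  have s1 : Summable (fun k : ℕ => f (2 * k)) :=
    hsf.comp_injective (fun a b h => by omega)
  have s2 : Summable (fun k : ℕ => f (2 * k + 1)) :=
    hsf.comp_injective (fun a b h => by omega)
  have key : ∀ m : ℕ, f (2 * m) + f (2 * m + 1)
      = u ^ ((2 * (R + 2 * (m : ℤ)) - 1) ^ 2) - u ^ ((2 * (R + 2 * (m : ℤ)) + 1) ^ 2) := by
    intro m
    have e1 : (2 * R + 2 * ((2 * m : ℕ) : ℤ) - 1) ^ 2 = (2 * (R + 2 * (m : ℤ)) - 1) ^ 2 := by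
      push_cast; ring
    have e2 : (2 * R + 2 * ((2 * m + 1 : ℕ) : ℤ) - 1) ^ 2 = (2 * (R + 2 * (m : ℤ)) + 1) ^ 2 := by
      push_cast; ring
    have p1 : ((-1 : ℂ)) ^ (2 * m) = 1 := by
      rw [pow_mul]; norm_num
    have p2 : ((-1 : ℂ)) ^ (2 * m + 1) = -1 := by
      rw [pow_succ, pow_mul]; norm_num
    rw [hf]
    simp only [e1, e2, p1, p2]
    ring
  calc ∑' l, f l = (∑' k, f (2 * k)) + ∑' k, f (2 * k + 1) := (tsum_even_add_odd s1 s2).symm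
    _ = ∑' m, (f (2 * m) + f (2 * m + 1)) := (Summable.tsum_add s1 s2).symm
    _ = _ := tsum_congr key

/-- Branching-function identity for `sl(2)`-hat at level `−1/2`:
with `R = max(N, 2−N)`,
`Σ_{ℓ≥0} (−1)^ℓ u^{(2N+2ℓ−1)²} = Σ_{m≥0} (u^{(2(R+2m)−1)²} − u^{(2(R+2m)+1)²})`,
both series converging absolutely, for `N ∈ ℤ` and `|u| < 1`. -/
theorem stmt_6 (N : ℤ) (u : ℂ) (hu : ‖u‖ < 1) :
    Summable (fun l : ℕ => ‖(-1 : ℂ) ^ l * u ^ ((2 * N + 2 * (l : ℤ) - 1) ^ 2)‖) ∧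
    Summable (fun m : ℕ =>
        ‖u ^ ((2 * (max N (2 - N) + 2 * (m : ℤ)) - 1) ^ 2)
          - u ^ ((2 * (max N (2 - N) + 2 * (m : ℤ)) + 1) ^ 2)‖) ∧
    (∑' l : ℕ, (-1 : ℂ) ^ l * u ^ ((2 * N + 2 * (l : ℤ) - 1) ^ 2))
      = ∑' m : ℕ, (u ^ ((2 * (max N (2 - N) + 2 * (m : ℤ)) - 1) ^ 2)
          - u ^ ((2 * (max N (2 - N) + 2 * (m : ℤ)) + 1) ^ 2)) := by
  set R : ℤ := max N (2 - N) with hRdef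
  have hnorm : ∀ (M : ℤ) (l : ℕ), ‖(-1 : ℂ) ^ l * u ^ ((2 * M + 2 * (l : ℤ) - 1) ^ 2)‖
      = ‖u‖ ^ ((2 * M - 1 + 2 * (l : ℤ)) ^ 2) := by
    intro M l
    simp only [norm_mul, norm_pow, norm_neg, norm_one, one_pow, one_mul, norm_zpow]
    congr 1; ring
  -- first summability
  have hS1 : Summable (fun l : ℕ => ‖(-1 : ℂ) ^ l * u ^ ((2 * N + 2 * (l : ℤ) - 1) ^ 2)‖) :=
    (aux_sum u hu (2 * N - 1) ⟨N - 1, by ring⟩).congr (fun l => (hnorm N l).symm)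
  refine ⟨hS1, ?_, ?_⟩
  · -- second summability
    have hA : Summable (fun m : ℕ => ‖u‖ ^ ((2 * (R + 2 * (m : ℤ)) - 1) ^ 2)) := by
      have := (aux_sum u hu (2 * R - 1) ⟨R - 1, by ring⟩).comp_injective
        (fun a b h => by dsimp at h; omega : Function.Injective (fun m : ℕ => 2 * m))
      refine this.congr (fun m => ?_)
      show ‖u‖ ^ ((2 * R - 1 + 2 * ((2 * m : ℕ) : ℤ)) ^ 2) = _
      congr 1; push_cast; ring
    have hB : Summable (fun m : ℕ => ‖u‖ ^ ((2 * (R + 2 * (m : ℤ)) + 1) ^ 2)) := by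
      have := (aux_sum u hu (2 * R + 1) ⟨R, by ring⟩).comp_injective
        (fun a b h => by dsimp at h; omega : Function.Injective (fun m : ℕ => 2 * m))
      refine this.congr (fun m => ?_)
      show ‖u‖ ^ ((2 * R + 1 + 2 * ((2 * m : ℕ) : ℤ)) ^ 2) = _
      congr 1; push_cast; ring
    refine Summable.of_nonneg_of_le (fun m => norm_nonneg _) (fun m => ?_) (hA.add hB)
    calc ‖u ^ ((2 * (R + 2 * (m : ℤ)) - 1) ^ 2) - u ^ ((2 * (R + 2 * (m : ℤ)) + 1) ^ 2)‖
        ≤ ‖u ^ ((2 * (R + 2 * (m : ℤ)) - 1) ^ 2)‖ + ‖u ^ ((2 * (R + 2 * (m : ℤ)) + 1) ^ 2)‖ :=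
          norm_sub_le _ _
      _ = _ := by rw [norm_zpow, norm_zpow]
  · -- the identity
    rcases le_or_gt 1 N with hN | hN
    · have hR : R = N := by rw [hRdef]; exact max_eq_left (by omega)
      rw [hR]
      exact pair_sum u hu N
    · -- N ≤ 0
      have hR : R = 2 - N := by rw [hRdef]; exact max_eq_right (by omega)
      set f : ℕ → ℂ := fun l => (-1 : ℂ) ^ l * u ^ ((2 * N + 2 * (l : ℤ) - 1) ^ 2) with hf
      have hsf : Summable f := Summable.of_norm hS1
      set K : ℕ := 2 * (1 - N).toNat with hK
      have hKZ : (K : ℤ) = 2 * (1 - N) := by rw [hK]; push_cast; omega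
      have hKeven : Even K := ⟨(1 - N).toNat, by omega⟩
      have hsplit := Summable.sum_add_tsum_nat_add K hsf
      have hfront : ∑ i ∈ Finset.range K, f i = 0 := by
        have hrefl : ∑ i ∈ Finset.range K, f (K - 1 - i) = ∑ i ∈ Finset.range K, f i :=
          Finset.sum_range_reflect f K
      -- pairwise cancellation
        have hpair : ∀ i ∈ Finset.range K, f (K - 1 - i) + f i = 0 := by
          intro i hi
          rw [Finset.mem_range] at hi
          have hcast : ((K - 1 - i : ℕ) : ℤ) = (K : ℤ) - 1 - (i : ℤ) := by omega
          have hexp : (2 * N + 2 * ((K - 1 - i : ℕ) : ℤ) - 1) ^ 2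
              = (2 * N + 2 * (i : ℤ) - 1) ^ 2 := by
            rw [hcast, hKZ]; ring
          rcases Nat.even_or_odd i with he | ho
          · have h1 : (-1 : ℂ) ^ i = 1 := he.neg_one_pow
            have hodd : Odd (K - 1 - i) := by
              rw [Nat.odd_iff]; rw [Nat.even_iff] at he; rcases hKeven with ⟨t, ht⟩; omega
            have h2 : (-1 : ℂ) ^ (K - 1 - i) = -1 := hodd.neg_one_pow
            rw [hf]; simp only [h1, h2, hexp]; ring
          · have h1 : (-1 : ℂ) ^ i = -1 := ho.neg_one_pow
            have heven : Even (K - 1 - i) := by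
              rw [Nat.even_iff]; rw [Nat.odd_iff] at ho; rcases hKeven with ⟨t, ht⟩; omega
            have h2 : (-1 : ℂ) ^ (K - 1 - i) = 1 := heven.neg_one_pow
            rw [hf]; simp only [h1, h2, hexp]; ring
        have hsum2 : (∑ i ∈ Finset.range K, f i) + ∑ i ∈ Finset.range K, f i = 0 := by
          calc (∑ i ∈ Finset.range K, f i) + ∑ i ∈ Finset.range K, f i
              = (∑ i ∈ Finset.range K, f (K - 1 - i)) + ∑ i ∈ Finset.range K, f i := by
                rw [hrefl]
            _ = ∑ i ∈ Finset.range K, (f (K - 1 - i) + f i) := (Finset.sum_add_distrib).symm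
            _ = 0 := Finset.sum_eq_zero hpair
        exact add_self_eq_zero.mp hsum2
      have htail : (∑' i : ℕ, f (i + K))
          = ∑' l : ℕ, (-1 : ℂ) ^ l * u ^ ((2 * (2 - N) + 2 * (l : ℤ) - 1) ^ 2) := by
        refine tsum_congr (fun i => ?_)
        have hsign : (-1 : ℂ) ^ (i + K) = (-1 : ℂ) ^ i := by
          rw [pow_add, hKeven.neg_one_pow, mul_one]
        have hexp : (2 * N + 2 * ((i + K : ℕ) : ℤ) - 1) ^ 2
            = (2 * (2 - N) + 2 * (i : ℤ) - 1) ^ 2 := by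
          push_cast [hKZ]; ring
        rw [hf]; simp only [hsign, hexp]
      rw [hR]
      calc (∑' l : ℕ, f l) = (∑ i ∈ Finset.range K, f i) + ∑' i : ℕ, f (i + K) := hsplit.symm
        _ = ∑' i : ℕ, f (i + K) := by rw [hfront, zero_add]
        _ = ∑' l : ℕ, (-1 : ℂ) ^ l * u ^ ((2 * (2 - N) + 2 * (l : ℤ) - 1) ^ 2) := htail
        _ = _ := pair_sum u hu (2 - N)
end

section
/- Let λ ∈ {0,1} and s ∈ ℤ, and let u, w be complex numbers with 0 < |u| < 1 and |u|^{2−2s} < |w| < |u|^{−2s−2}. For each integer n set R_n = max(2n+λ+1, 1−2n−λ). Then Σ_{n∈ℤ} w^{4n+2λ−s} ( Σ_{ℓ=0}^∞ (−1)^ℓ u^{(2ℓ+s+1)(8n+4λ+2ℓ−s+1)} ) = Σ_{n∈ℤ} w^{4n+2λ−s} u^{−(4n+2λ−s)²} ( Σ_{m=0}^∞ (u^{(2(R_n+2m)−1)²} − u^{(2(R_n+2m)+1)²}) ), where each inner series over ℓ and over m converges absolutely for |u| < 1, and both outer series over n converge absolutely in the stated annulus. -/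
private lemma aux_sq (K : ℤ) (l : ℕ) : (l : ℤ) ≤ (2*l+K)^2 + K^2 := by
  nlinarith [Int.le_self_sq (l:ℤ), sq_nonneg ((l:ℤ)+K), sq_nonneg (l:ℤ)]

/-- base real summability -/
private lemma sumR {r : ℝ} (hr0 : 0 < r) (hr1 : r < 1) (K c : ℤ) :
    Summable (fun l : ℕ => r ^ ((2*l+K)^2 + c : ℤ)) := by
  have hmaj : Summable (fun l : ℕ => r ^ (c - K^2 : ℤ) * r ^ l) :=
    (summable_geometric_of_lt_one hr0.le hr1).mul_left _
  refine Summable.of_nonneg_of_le (fun l => zpow_nonneg hr0.le _) (fun l => ?_) hmaj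
  have h1 : (c - K^2 : ℤ) + l ≤ (2*l+K)^2 + c := by linarith [aux_sq K l]
  calc r ^ ((2*l+K)^2 + c : ℤ) ≤ r ^ ((c - K^2 : ℤ) + l) :=
        zpow_le_zpow_right_of_le_one₀ hr0 hr1.le h1
    _ = r ^ (c - K^2 : ℤ) * r ^ l := by
        rw [zpow_add₀ (ne_of_gt hr0), zpow_natCast]

/-- complex summability of the alternating series -/
private lemma sumC {u : ℂ} (hu0 : 0 < ‖u‖) (hu1 : ‖u‖ < 1) (K : ℤ) :
    Summable (fun l : ℕ => (-1:ℂ)^l * u ^ ((2*(l:ℤ)+K)^2)) := by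
  refine Summable.of_norm ((sumR hu0 hu1 K 0).congr (fun l => ?_))
  rw [norm_mul, norm_pow, norm_neg, norm_one, one_pow, one_mul, norm_zpow, add_zero]

private lemma pairC {u : ℂ} (hu0 : 0 < ‖u‖) (hu1 : ‖u‖ < 1) (K : ℤ) :
    ∑' l : ℕ, (-1:ℂ)^l * u ^ ((2*(l:ℤ)+K)^2)
      = ∑' m : ℕ, (u ^ ((4*(m:ℤ)+K)^2) - u ^ ((4*(m:ℤ)+K+2)^2)) := by
  set f : ℕ → ℂ := fun l => (-1:ℂ)^l * u ^ ((2*(l:ℤ)+K)^2) with hf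
  have hsf : Summable f := sumC hu0 hu1 K
  have he : Summable (fun m : ℕ => f (2*m)) :=
    hsf.comp_injective (mul_right_injective₀ two_ne_zero)
  have ho : Summable (fun m : ℕ => f (2*m+1)) :=
    hsf.comp_injective (fun a b h => by omega)
  have h1 : ∀ m : ℕ, f (2*m) = u ^ ((4*(m:ℤ)+K)^2) := by
    intro m
    have : ((-1:ℂ))^(2*m) = 1 := by
      rw [pow_mul]; norm_num
    rw [hf]; simp only []
    rw [this, one_mul]
    congr 1
    push_cast; ring
  have h2 : ∀ m : ℕ, f (2*m+1) = - u ^ ((4*(m:ℤ)+K+2)^2) := by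
    intro m
    have : ((-1:ℂ))^(2*m+1) = -1 := by
      rw [pow_succ, pow_mul]; norm_num
    rw [hf]; simp only []
    rw [this, neg_one_mul]
    congr 2
    push_cast; ring
  calc ∑' l, f l = ∑' m, f (2*m) + ∑' m, f (2*m+1) := (tsum_even_add_odd he ho).symm
    _ = ∑' m : ℕ, u ^ ((4*(m:ℤ)+K)^2) + ∑' m : ℕ, (- u ^ ((4*(m:ℤ)+K+2)^2)) := by
        rw [tsum_congr h1, tsum_congr h2]
    _ = ∑' m : ℕ, (u ^ ((4*(m:ℤ)+K)^2) - u ^ ((4*(m:ℤ)+K+2)^2)) := by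
        rw [← Summable.tsum_add (he.congr h1) (ho.congr h2)]
        exact tsum_congr (fun m => by ring)

private lemma cancelC {u : ℂ} (hu0 : 0 < ‖u‖) (hu1 : ‖u‖ < 1) (K : ℤ)
    (hK : K ≤ -1) (hodd : Odd K) :
    ∑' l : ℕ, (-1:ℂ)^l * u ^ ((2*(l:ℤ)+K)^2)
      = ∑' l : ℕ, (-1:ℂ)^l * u ^ ((2*(l:ℤ)+(2-K))^2) := by
  set f : ℕ → ℂ := fun l => (-1:ℂ)^l * u ^ ((2*(l:ℤ)+K)^2) with hf
  have hsf : Summable f := sumC hu0 hu1 K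
  set N : ℕ := (1-K).toNat with hN
  have hNz : (N : ℤ) = 1 - K := Int.toNat_of_nonneg (by omega)
  have hNodd : Odd (N - 1) := by
    obtain ⟨j, hj⟩ := hodd
    have hNval : N = 2 * (-j).toNat := by omega
    exact ⟨(-j).toNat - 1, by omega⟩
  -- initial block cancels
  have hblock : ∑ i ∈ Finset.range N, f i = 0 := by
    have hrefl := Finset.sum_range_reflect f N
    have hterm : ∀ i ∈ Finset.range N, f (N - 1 - i) = - f i := by
      intro i hi
      rw [Finset.mem_range] at hi
      have hcast : ((N - 1 - i : ℕ) : ℤ) = (N:ℤ) - 1 - i := by omega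
      rw [hf]
      simp only []
      have hsign : ((-1:ℂ))^(N-1-i) = -(-1:ℂ)^i := by
        have h1 : ((-1:ℂ))^(N-1-i) * (-1:ℂ)^i = (-1:ℂ)^(N-1) := by
          rw [← pow_add]; congr 1; omega
        have h2 : ((-1:ℂ))^(N-1) = -1 := hNodd.neg_one_pow
        have h3 : ((-1:ℂ))^i * (-1:ℂ)^i = 1 := by
          rw [← pow_add, ← two_mul, pow_mul]; norm_num
        calc ((-1:ℂ))^(N-1-i) = ((-1:ℂ))^(N-1-i) * ((-1:ℂ)^i * (-1:ℂ)^i) := by rw [h3, mul_one]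
          _ = (((-1:ℂ))^(N-1-i) * (-1:ℂ)^i) * (-1:ℂ)^i := by ring
          _ = -(-1:ℂ)^i := by rw [h1, h2]; ring
      have hexp : (2*((N - 1 - i : ℕ):ℤ)+K)^2 = (2*(i:ℤ)+K)^2 := by
        rw [hcast, hNz]; ring
      rw [hsign, hexp]; ring
    have : ∑ i ∈ Finset.range N, f i = - ∑ i ∈ Finset.range N, f i := by
      calc ∑ i ∈ Finset.range N, f i = ∑ i ∈ Finset.range N, f (N - 1 - i) := hrefl.symm
        _ = ∑ i ∈ Finset.range N, (- f i) := Finset.sum_congr rfl hterm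
        _ = - ∑ i ∈ Finset.range N, f i := by rw [Finset.sum_neg_distrib]
    have h2 : (2:ℂ) * ∑ i ∈ Finset.range N, f i = 0 := by linear_combination this
    exact (mul_eq_zero.mp h2).resolve_left two_ne_zero
  have hNeven : Even N := by
    obtain ⟨j, hj⟩ := hodd
    exact ⟨(-j).toNat, by omega⟩
  have htail : ∀ i : ℕ, f (i + N) = (-1:ℂ)^i * u ^ ((2*(i:ℤ)+(2-K))^2) := by
    intro i
    rw [hf]; simp only []
    have hsign : ((-1:ℂ))^(i+N) = (-1:ℂ)^i := by
      rw [pow_add, hNeven.neg_one_pow, mul_one]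
    have hcast : ((i+N:ℕ):ℤ) = (i:ℤ) + (1-K) := by omega
    have hexp : (2*((i+N:ℕ):ℤ)+K)^2 = (2*(i:ℤ)+(2-K))^2 := by rw [hcast]; ring
    rw [hsign, hexp]
  calc ∑' l, f l = ∑ i ∈ Finset.range N, f i + ∑' i, f (i+N) :=
        (Summable.sum_add_tsum_nat_add N hsf).symm
    _ = ∑' i, f (i+N) := by rw [hblock, zero_add]
    _ = _ := tsum_congr htail

private lemma geomZ {p t : ℝ} (hp : 0 < p) (ht : 0 < t) (α β γ δ : ℤ)
    (hq : p^α * t^β < 1) :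
    Summable (fun k : ℕ => p ^ (α*k+γ : ℤ) * t ^ (β*k+δ : ℤ)) := by
  have hq0 : 0 ≤ p^α * t^β := by positivity
  have hterm : ∀ k : ℕ, p ^ (α*k+γ : ℤ) * t ^ (β*k+δ : ℤ)
      = (p^γ*t^δ) * (p^α*t^β)^k := by
    intro k
    calc p ^ (α*k+γ:ℤ) * t ^ (β*k+δ:ℤ)
        = (p^γ*p^(α*(k:ℤ))) * (t^δ*t^(β*(k:ℤ))) := by
          rw [zpow_add₀ hp.ne', zpow_add₀ ht.ne']; ring
      _ = (p^γ*t^δ) * ((p^α)^(k:ℤ) * (t^β)^(k:ℤ)) := by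
          rw [zpow_mul, zpow_mul]; ring
      _ = (p^γ*t^δ) * (p^α*t^β)^k := by
          rw [zpow_natCast, zpow_natCast, mul_pow]
  exact ((summable_geometric_of_lt_one hq0 hq).mul_left _).congr
    (fun k => (hterm k).symm)

private lemma qlt {p t : ℝ} (ht : 0 < t) (e : ℤ) (hp : 0 < p) (h : p < t ^ e) :
    p ^ (4:ℤ) * t ^ (-4*e : ℤ) < 1 := by
  have h4 : p^(4:ℕ) < (t^e)^(4:ℕ) := by
    apply pow_lt_pow_left₀ h hp.le
    norm_num
  have e1 : ((t:ℝ)^e)^(4:ℕ) * t ^ (-4*e:ℤ) = 1 := by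
    rw [← zpow_natCast (t^e), ← zpow_mul, ← zpow_add₀ ht.ne']
    have h0 : e * ((4:ℕ):ℤ) + (-4*e) = 0 := by push_cast; ring
    rw [h0, zpow_zero]
  calc p^(4:ℤ) * t^(-4*e:ℤ) = p^(4:ℕ) * t^(-4*e:ℤ) := by norm_cast
    _ < (t^e)^(4:ℕ) * t^(-4*e:ℤ) := by
        exact mul_lt_mul_of_pos_right h4 (zpow_pos ht _)
    _ = 1 := e1

private lemma qlt' {p t : ℝ} (ht : 0 < t) (e : ℤ) (hp : 0 < p) (h : t ^ e < p) :
    p ^ (-4:ℤ) * t ^ (4*e : ℤ) < 1 := by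
  have h' : p⁻¹ < t ^ (-e) := by
    rw [zpow_neg]
    exact inv_strictAnti₀ (zpow_pos ht _) h
  have := qlt ht (-e) (inv_pos.mpr hp) h'
  have h1 : (p⁻¹) ^ (4:ℤ) = p ^ (-4:ℤ) := by
    rw [inv_zpow, ← zpow_neg]
  have h2 : (-4) * (-e) = 4*e := by ring
  rwa [h1, h2] at this

private lemma sum2 {u : ℂ} (hu0 : 0 < ‖u‖) (hu1 : ‖u‖ < 1) (R : ℤ) (hR : 1 ≤ R) :
    Summable (fun m : ℕ => ‖u ^ ((2*(R+2*(m:ℤ))-1)^2) - u ^ ((2*(R+2*(m:ℤ))+1)^2)‖) ∧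
    ∑' m : ℕ, ‖u ^ ((2*(R+2*(m:ℤ))-1)^2) - u ^ ((2*(R+2*(m:ℤ))+1)^2)‖
      ≤ 2 * (1-‖u‖)⁻¹ * ‖u‖ ^ ((2*R-1)^2) := by
  set r := ‖u‖ with hr
  have hmaj : ∀ m : ℕ, ‖u ^ ((2*(R+2*(m:ℤ))-1)^2) - u ^ ((2*(R+2*(m:ℤ))+1)^2)‖
      ≤ (2 * r ^ ((2*R-1)^2)) * r ^ m := by
    intro m
    have h1 : ((2*R-1)^2 : ℤ) + m ≤ (2*(R+2*(m:ℤ))-1)^2 := by nlinarith [Int.natCast_nonneg m]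
    have h2 : ((2*R-1)^2 : ℤ) + m ≤ (2*(R+2*(m:ℤ))+1)^2 := by nlinarith [Int.natCast_nonneg m]
    have e0 : r ^ ((2*R-1)^2 : ℤ) * r ^ m = r ^ (((2*R-1)^2 : ℤ) + m) := by
      rw [zpow_add₀ (ne_of_gt hu0), zpow_natCast]
    calc ‖u ^ ((2*(R+2*(m:ℤ))-1)^2) - u ^ ((2*(R+2*(m:ℤ))+1)^2)‖
        ≤ ‖u ^ ((2*(R+2*(m:ℤ))-1)^2 : ℤ)‖ + ‖u ^ ((2*(R+2*(m:ℤ))+1)^2 : ℤ)‖ :=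
          norm_sub_le _ _
      _ = r ^ ((2*(R+2*(m:ℤ))-1)^2 : ℤ) + r ^ ((2*(R+2*(m:ℤ))+1)^2 : ℤ) := by
          rw [norm_zpow, norm_zpow]
      _ ≤ r ^ (((2*R-1)^2 : ℤ) + m) + r ^ (((2*R-1)^2 : ℤ) + m) := by
          exact add_le_add (zpow_le_zpow_right_of_le_one₀ hu0 hu1.le h1)
            (zpow_le_zpow_right_of_le_one₀ hu0 hu1.le h2)
      _ = (2 * r ^ ((2*R-1)^2)) * r ^ m := by rw [← e0]; ring
  have hgeom : Summable (fun m : ℕ => (2 * r ^ ((2*R-1)^2 : ℤ)) * r ^ m) :=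
    (summable_geometric_of_lt_one (norm_nonneg u) hu1).mul_left _
  have hs : Summable (fun m : ℕ => ‖u ^ ((2*(R+2*(m:ℤ))-1)^2) - u ^ ((2*(R+2*(m:ℤ))+1)^2)‖) :=
    Summable.of_nonneg_of_le (fun m => norm_nonneg _) hmaj hgeom
  refine ⟨hs, ?_⟩
  calc ∑' m : ℕ, ‖u ^ ((2*(R+2*(m:ℤ))-1)^2) - u ^ ((2*(R+2*(m:ℤ))+1)^2)‖
      ≤ ∑' m : ℕ, (2 * r ^ ((2*R-1)^2 : ℤ)) * r ^ m := Summable.tsum_le_tsum hmaj hs hgeom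
    _ = (2 * r ^ ((2*R-1)^2 : ℤ)) * (1-r)⁻¹ := by
        rw [tsum_mul_left, tsum_geometric_of_lt_one (norm_nonneg u) hu1]
    _ = 2 * (1-r)⁻¹ * r ^ ((2*R-1)^2) := by ring

/-- Full character decomposition `ch L_λ^s = Σ_{n∈ℤ} ch F_{2n+λ−s/2} · ch M_{2n+λ+1,1}`
for `sl(2)`-hat at level `−1/2`: with `R_n = max(2n+λ+1, 1−2n−λ)`,
`Σ_{n∈ℤ} w^{4n+2λ−s} (Σ_{ℓ≥0} (−1)^ℓ u^{(2ℓ+s+1)(8n+4λ+2ℓ−s+1)})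
 = Σ_{n∈ℤ} w^{4n+2λ−s} u^{−(4n+2λ−s)²} (Σ_{m≥0} (u^{(2(R_n+2m)−1)²} − u^{(2(R_n+2m)+1)²}))`,
each inner series converging absolutely for `|u| < 1`, and both outer series over `n`
converging absolutely in the annulus `|u|^{2−2s} < |w| < |u|^{−2s−2}`, `0 < |u| < 1`. -/
theorem stmt_7 (lam s : ℤ) (hlam : lam = 0 ∨ lam = 1) (u w : ℂ)
    (hu0 : 0 < ‖u‖) (hu1 : ‖u‖ < 1)
    (hw1 : ‖u‖ ^ (2 - 2 * s) < ‖w‖) (hw2 : ‖w‖ < ‖u‖ ^ (-2 * s - 2)) :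
    (∀ n : ℤ, Summable (fun l : ℕ =>
        ‖(-1 : ℂ) ^ l *
          u ^ ((2 * (l : ℤ) + s + 1) * (8 * n + 4 * lam + 2 * (l : ℤ) - s + 1))‖)) ∧
    (∀ n : ℤ, Summable (fun m : ℕ =>
        ‖u ^ ((2 * (max (2 * n + lam + 1) (1 - 2 * n - lam) + 2 * (m : ℤ)) - 1) ^ 2)
          - u ^ ((2 * (max (2 * n + lam + 1) (1 - 2 * n - lam) + 2 * (m : ℤ)) + 1) ^ 2)‖)) ∧
    Summable (fun n : ℤ => ‖w ^ (4 * n + 2 * lam - s) *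
        ∑' l : ℕ, (-1 : ℂ) ^ l *
          u ^ ((2 * (l : ℤ) + s + 1) * (8 * n + 4 * lam + 2 * (l : ℤ) - s + 1))‖) ∧
    Summable (fun n : ℤ => ‖w ^ (4 * n + 2 * lam - s) * u ^ (-(4 * n + 2 * lam - s) ^ 2) *
        ∑' m : ℕ,
          (u ^ ((2 * (max (2 * n + lam + 1) (1 - 2 * n - lam) + 2 * (m : ℤ)) - 1) ^ 2)
            - u ^ ((2 * (max (2 * n + lam + 1) (1 - 2 * n - lam) + 2 * (m : ℤ)) + 1) ^ 2))‖) ∧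
    (∑' n : ℤ, w ^ (4 * n + 2 * lam - s) *
        ∑' l : ℕ, (-1 : ℂ) ^ l *
          u ^ ((2 * (l : ℤ) + s + 1) * (8 * n + 4 * lam + 2 * (l : ℤ) - s + 1)))
      = ∑' n : ℤ, w ^ (4 * n + 2 * lam - s) * u ^ (-(4 * n + 2 * lam - s) ^ 2) *
          ∑' m : ℕ,
            (u ^ ((2 * (max (2 * n + lam + 1) (1 - 2 * n - lam) + 2 * (m : ℤ)) - 1) ^ 2)
              - u ^ ((2 * (max (2 * n + lam + 1) (1 - 2 * n - lam) + 2 * (m : ℤ)) + 1) ^ 2)) := by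
  have hune : u ≠ 0 := by
    intro h; rw [h] at hu0; simp at hu0
  have hl01 : 0 ≤ lam ∧ lam ≤ 1 := by rcases hlam with h | h <;> omega
  have hw0 : 0 < ‖w‖ := lt_trans (zpow_pos hu0 _) hw1
  -- Claim 1
  have claim1 : ∀ n : ℤ, Summable (fun l : ℕ =>
      ‖(-1 : ℂ) ^ l *
        u ^ ((2 * (l : ℤ) + s + 1) * (8 * n + 4 * lam + 2 * (l : ℤ) - s + 1))‖) := by
    intro n
    refine (sumR hu0 hu1 (4*n+2*lam+1) (-(4*n+2*lam-s)^2)).congr (fun l => ?_)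
    rw [norm_mul, norm_pow, norm_neg, norm_one, one_pow, one_mul, norm_zpow]
    congr 1
    ring
  -- R is at least 1
  have hR1 : ∀ n : ℤ, 1 ≤ max (2*n+lam+1) (1-2*n-lam) := by
    intro n
    rcases le_or_gt 0 (2*n+lam) with h | h
    · exact le_trans (by omega) (le_max_left _ _)
    · exact le_trans (by omega) (le_max_right _ _)
  -- Claim 2
  have claim2 : ∀ n : ℤ, Summable (fun m : ℕ =>
      ‖u ^ ((2 * (max (2 * n + lam + 1) (1 - 2 * n - lam) + 2 * (m : ℤ)) - 1) ^ 2)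
        - u ^ ((2 * (max (2 * n + lam + 1) (1 - 2 * n - lam) + 2 * (m : ℤ)) + 1) ^ 2)‖) :=
    fun n => (sum2 hu0 hu1 _ (hR1 n)).1
  -- Key identity per n
  have key : ∀ n : ℤ,
      (∑' l : ℕ, (-1 : ℂ) ^ l *
          u ^ ((2 * (l : ℤ) + s + 1) * (8 * n + 4 * lam + 2 * (l : ℤ) - s + 1)))
        = u ^ (-(4 * n + 2 * lam - s) ^ 2) *
          ∑' m : ℕ,
            (u ^ ((2 * (max (2 * n + lam + 1) (1 - 2 * n - lam) + 2 * (m : ℤ)) - 1) ^ 2)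
              - u ^ ((2 * (max (2 * n + lam + 1) (1 - 2 * n - lam) + 2 * (m : ℤ)) + 1) ^ 2)) := by
    intro n
    have hsplit : ∀ l : ℕ, (-1 : ℂ) ^ l *
        u ^ ((2 * (l : ℤ) + s + 1) * (8 * n + 4 * lam + 2 * (l : ℤ) - s + 1))
        = u ^ (-(4*n+2*lam-s)^2) * ((-1:ℂ)^l * u ^ ((2*(l:ℤ)+(4*n+2*lam+1))^2)) := by
      intro l
      have he : (2 * (l : ℤ) + s + 1) * (8 * n + 4 * lam + 2 * (l : ℤ) - s + 1)
          = -(4*n+2*lam-s)^2 + (2*(l:ℤ)+(4*n+2*lam+1))^2 := by ring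
      rw [he, zpow_add₀ hune]
      ring
    rw [tsum_congr hsplit, tsum_mul_left]
    congr 1
    rcases le_or_gt 0 (2*n+lam) with hpos | hneg
    · have hmax : max (2*n+lam+1) (1-2*n-lam) = 2*n+lam+1 := max_eq_left (by omega)
      rw [pairC hu0 hu1 (4*n+2*lam+1), hmax]
      exact tsum_congr (fun m => by rw [show (2*((2*n+lam+1) + 2*(m:ℤ))-1)^2
        = (4*(m:ℤ)+(4*n+2*lam+1))^2 from by ring, show (2*((2*n+lam+1) + 2*(m:ℤ))+1)^2
        = (4*(m:ℤ)+(4*n+2*lam+1)+2)^2 from by ring])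
    · have hmax : max (2*n+lam+1) (1-2*n-lam) = 1-2*n-lam := max_eq_right (by omega)
      have hodd : Odd (4*n+2*lam+1) := ⟨2*n+lam, by ring⟩
      rw [cancelC hu0 hu1 (4*n+2*lam+1) (by omega) hodd,
        pairC hu0 hu1 (2-(4*n+2*lam+1)), hmax]
      exact tsum_congr (fun m => by rw [show (2*((1-2*n-lam) + 2*(m:ℤ))-1)^2
        = (4*(m:ℤ)+(2-(4*n+2*lam+1)))^2 from by ring, show (2*((1-2*n-lam) + 2*(m:ℤ))+1)^2
        = (4*(m:ℤ)+(2-(4*n+2*lam+1))+2)^2 from by ring])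
  -- majorant summable over ℤ
  have hGsum : Summable (fun n : ℤ => ‖w‖ ^ (4*n+2*lam-s) *
      ‖u‖ ^ ((2 * max (2*n+lam+1) (1-2*n-lam) - 1)^2 - (4*n+2*lam-s)^2)) := by
    apply Summable.of_nat_of_neg_add_one
    · refine (geomZ hw0 hu0 4 (-4*(-2*s-2)) (2*lam-s) ((s+1)*(4*lam+1-s))
        (qlt hu0 (-2*s-2) hw0 hw2)).congr (fun k => ?_)
      have hmax : max (2*(k:ℤ)+lam+1) (1-2*(k:ℤ)-lam) = 2*(k:ℤ)+lam+1 :=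
        max_eq_left (by omega)
      rw [hmax]
      congr 1 <;> congr 1 <;> ring
    · refine (geomZ hw0 hu0 (-4) (4*(2-2*s)) (2*lam-s-4) ((1-s)*(9-4*lam+s))
        (qlt' hu0 (2-2*s) hw0 hw1)).congr (fun k => ?_)
      have hmax : max (2*(-((k:ℤ)+1))+lam+1) (1-2*(-((k:ℤ)+1))-lam)
          = 1-2*(-((k:ℤ)+1))-lam := max_eq_right (by omega)
      rw [hmax]
      congr 1 <;> congr 1 <;> ring
  -- Claim 4
  have claim4 : Summable (fun n : ℤ => ‖w ^ (4 * n + 2 * lam - s) *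
      u ^ (-(4 * n + 2 * lam - s) ^ 2) *
      ∑' m : ℕ,
        (u ^ ((2 * (max (2 * n + lam + 1) (1 - 2 * n - lam) + 2 * (m : ℤ)) - 1) ^ 2)
          - u ^ ((2 * (max (2 * n + lam + 1) (1 - 2 * n - lam) + 2 * (m : ℤ)) + 1) ^ 2))‖) := by
    refine Summable.of_nonneg_of_le (fun n => norm_nonneg _) (fun n => ?_)
      (hGsum.mul_left (2*(1-‖u‖)⁻¹))
    have hT := le_trans (norm_tsum_le_tsum_norm (sum2 hu0 hu1 _ (hR1 n)).1)
      (sum2 hu0 hu1 _ (hR1 n)).2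
    rw [norm_mul, norm_mul, norm_zpow, norm_zpow]
    calc ‖w‖ ^ (4*n+2*lam-s) * ‖u‖ ^ (-(4*n+2*lam-s)^2) *
          ‖∑' m : ℕ,
            (u ^ ((2 * (max (2*n+lam+1) (1-2*n-lam) + 2 * (m : ℤ)) - 1) ^ 2)
              - u ^ ((2 * (max (2*n+lam+1) (1-2*n-lam) + 2 * (m : ℤ)) + 1) ^ 2))‖
        ≤ ‖w‖ ^ (4*n+2*lam-s) * ‖u‖ ^ (-(4*n+2*lam-s)^2) *
          (2 * (1-‖u‖)⁻¹ * ‖u‖ ^ ((2 * max (2*n+lam+1) (1-2*n-lam) - 1)^2)) := by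
          apply mul_le_mul_of_nonneg_left hT (by positivity)
      _ = 2*(1-‖u‖)⁻¹ * (‖w‖ ^ (4*n+2*lam-s) *
          ‖u‖ ^ ((2 * max (2*n+lam+1) (1-2*n-lam) - 1)^2 - (4*n+2*lam-s)^2)) := by
          have hzz : ‖u‖ ^ ((2 * max (2*n+lam+1) (1-2*n-lam) - 1)^2 - (4*n+2*lam-s)^2)
              = ‖u‖ ^ ((2 * max (2*n+lam+1) (1-2*n-lam) - 1)^2) *
                ‖u‖ ^ (-(4*n+2*lam-s)^2) := by
            rw [← zpow_add₀ (ne_of_gt hu0), sub_eq_add_neg]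
          rw [hzz]; ring
  -- Claim 3
  have claim3 : Summable (fun n : ℤ => ‖w ^ (4 * n + 2 * lam - s) *
      ∑' l : ℕ, (-1 : ℂ) ^ l *
        u ^ ((2 * (l : ℤ) + s + 1) * (8 * n + 4 * lam + 2 * (l : ℤ) - s + 1))‖) := by
    refine claim4.congr (fun n => ?_)
    rw [key n, mul_assoc]
  refine ⟨claim1, claim2, claim3, claim4, ?_⟩
  exact tsum_congr (fun n => by rw [key n, mul_assoc])
end

section
/- Let s and m be integers, set R = max(m, 2−m), and let u be a complex number with 0 < |u| < 1. Then Σ_{ℓ=0}^∞ ( u^{4(3ℓ+s+1)(3m+3ℓ−s−2)} − u^{4(3ℓ+s+2)(3m+3ℓ−s−1)} ) = u^{−(3m−2s−3)²} · Σ_{j=0}^∞ ( u^{(3(R+2j)−1)²} − u^{(3(R+2j)+1)²} ), all series converging absolutely. -/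
open Finset

lemma aux_summable_norm_zpow {u : ℂ} (h0 : 0 < ‖u‖) (h1 : ‖u‖ < 1) (e : ℕ → ℤ) (N : ℕ)
    (he : ∀ n : ℕ, N ≤ n → (n : ℤ) ≤ e n) : Summable fun n : ℕ => ‖u ^ e n‖ := by
  rw [← summable_nat_add_iff N]
  refine Summable.of_nonneg_of_le (fun n => norm_nonneg _) (fun n => ?_)
    (summable_geometric_of_lt_one (norm_nonneg u) h1)
  rw [norm_zpow]
  calc ‖u‖ ^ e (n + N) ≤ ‖u‖ ^ (n : ℤ) := by
        refine zpow_le_zpow_right_of_le_one₀ h0 h1.le ?_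
        exact le_trans (by exact_mod_cast Nat.le_add_right n N) (he (n + N) (Nat.le_add_left N n))
    _ = ‖u‖ ^ n := zpow_natCast _ _

lemma aux_summable_diff {u : ℂ} (h0 : 0 < ‖u‖) (h1 : ‖u‖ < 1) (e1 e2 : ℕ → ℤ) (N : ℕ)
    (he1 : ∀ n : ℕ, N ≤ n → (n : ℤ) ≤ e1 n) (he2 : ∀ n : ℕ, N ≤ n → (n : ℤ) ≤ e2 n) :
    Summable fun n : ℕ => ‖u ^ e1 n - u ^ e2 n‖ :=
  Summable.of_nonneg_of_le (fun _ => norm_nonneg _) (fun n => norm_sub_le _ _)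
    ((aux_summable_norm_zpow h0 h1 e1 N he1).add (aux_summable_norm_zpow h0 h1 e2 N he2))

/-- Coefficient-wise branching identity for `ch L_0^s` of `sl(2)`-hat at level `−4/3`:
with `R = max(m, 2−m)`,
`Σ_{ℓ≥0} (u^{4(3ℓ+s+1)(3m+3ℓ−s−2)} − u^{4(3ℓ+s+2)(3m+3ℓ−s−1)})
 = u^{−(3m−2s−3)²} · Σ_{j≥0} (u^{(3(R+2j)−1)²} − u^{(3(R+2j)+1)²})`,
all series converging absolutely, for `s, m ∈ ℤ` and `0 < |u| < 1`. -/
theorem stmt_8 (s m : ℤ) (u : ℂ) (hu0 : 0 < ‖u‖) (hu1 : ‖u‖ < 1) :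
    Summable (fun l : ℕ =>
        ‖u ^ (4 * (3 * (l : ℤ) + s + 1) * (3 * m + 3 * (l : ℤ) - s - 2))
          - u ^ (4 * (3 * (l : ℤ) + s + 2) * (3 * m + 3 * (l : ℤ) - s - 1))‖) ∧
    Summable (fun j : ℕ =>
        ‖u ^ ((3 * (max m (2 - m) + 2 * (j : ℤ)) - 1) ^ 2)
          - u ^ ((3 * (max m (2 - m) + 2 * (j : ℤ)) + 1) ^ 2)‖) ∧
    (∑' l : ℕ, (u ^ (4 * (3 * (l : ℤ) + s + 1) * (3 * m + 3 * (l : ℤ) - s - 2))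
        - u ^ (4 * (3 * (l : ℤ) + s + 2) * (3 * m + 3 * (l : ℤ) - s - 1))))
      = u ^ (-(3 * m - 2 * s - 3) ^ 2) *
          ∑' j : ℕ, (u ^ ((3 * (max m (2 - m) + 2 * (j : ℤ)) - 1) ^ 2)
            - u ^ ((3 * (max m (2 - m) + 2 * (j : ℤ)) + 1) ^ 2)) := by
  have hu : u ≠ 0 := by simpa using hu0.ne'
  set R : ℤ := max m (2 - m) with hR
  have hR1 : 1 ≤ R := by omega
  -- summability of LHS series
  have hN : ∀ n : ℕ, (|s| + 3 * |m| + 3).toNat ≤ n → (|s| + 3 * |m| + 3 : ℤ) ≤ n := by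
    intro n hn
    exact_mod_cast Int.toNat_le.mp hn
  have hS1 : Summable (fun l : ℕ =>
      ‖u ^ (4 * (3 * (l : ℤ) + s + 1) * (3 * m + 3 * (l : ℤ) - s - 2))
        - u ^ (4 * (3 * (l : ℤ) + s + 2) * (3 * m + 3 * (l : ℤ) - s - 1))‖) := by
    refine aux_summable_diff hu0 hu1 _ _ (|s| + 3 * |m| + 3).toNat (fun n hn => ?_) (fun n hn => ?_) <;>
    · have h := hN n hn
      have h1 : |s| ≥ s := le_abs_self s
      have h2 : -|s| ≤ s := neg_abs_le s
      have h3 : |m| ≥ m := le_abs_self m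
      have h4 : -|m| ≤ m := neg_abs_le m
      have ha : 2 * (n : ℤ) ≤ 3 * (n : ℤ) + s + 1 := by omega
      have hb : (n : ℤ) ≤ 3 * m + 3 * (n : ℤ) - s - 2 := by omega
      have hb' : (n : ℤ) ≤ 3 * m + 3 * (n : ℤ) - s - 1 := by omega
      have hn0 : (0 : ℤ) ≤ n := Int.ofNat_nonneg n
      nlinarith [mul_le_mul ha hb hn0 (by omega), mul_le_mul ha hb' hn0 (by omega)]
  have hS2 : Summable (fun j : ℕ =>
      ‖u ^ ((3 * (R + 2 * (j : ℤ)) - 1) ^ 2) - u ^ ((3 * (R + 2 * (j : ℤ)) + 1) ^ 2)‖) := by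
    refine aux_summable_diff hu0 hu1 _ _ 0 (fun n _ => ?_) (fun n _ => ?_) <;>
    · have hn0 : (0 : ℤ) ≤ n := Int.ofNat_nonneg n
      nlinarith [sq_nonneg (3 * (R + 2 * (n : ℤ)) - 1), sq_nonneg (3 * (R + 2 * (n : ℤ)) + 1)]
  refine ⟨hS1, hS2, ?_⟩
  -- the equality
  obtain ⟨k, hk, hrefl⟩ : ∃ k : ℕ, R = m + 2 * (k : ℤ) ∧ (k = 0 ∨ m = 1 - (k : ℤ)) := by
    rcases le_total m 1 with h | h
    · refine ⟨(1 - m).toNat, ?_, Or.inr ?_⟩ <;>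
      · have : ((1 - m).toNat : ℤ) = 1 - m := Int.toNat_of_nonneg (by omega)
        omega
    · exact ⟨0, by omega, Or.inl rfl⟩
  have hf : Summable (fun l : ℕ =>
      u ^ (4 * (3 * (l : ℤ) + s + 1) * (3 * m + 3 * (l : ℤ) - s - 2))
        - u ^ (4 * (3 * (l : ℤ) + s + 2) * (3 * m + 3 * (l : ℤ) - s - 1))) := hS1.of_norm
  rw [← Summable.sum_add_tsum_nat_add k hf]
  have hfin : (∑ l ∈ range k,
      (u ^ (4 * (3 * (l : ℤ) + s + 1) * (3 * m + 3 * (l : ℤ) - s - 2))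
        - u ^ (4 * (3 * (l : ℤ) + s + 2) * (3 * m + 3 * (l : ℤ) - s - 1)))) = 0 := by
    rcases hrefl with h | hm
    · simp [h]
    rw [Finset.sum_sub_distrib, sub_eq_zero]
    rw [← Finset.sum_range_reflect (fun l => u ^ (4 * (3 * (l : ℤ) + s + 2) * (3 * m + 3 * (l : ℤ) - s - 1))) k]
    refine Finset.sum_congr rfl (fun l hl => ?_)
    have hl' : l < k := Finset.mem_range.mp hl
    have hc : ((k - 1 - l : ℕ) : ℤ) = (k : ℤ) - 1 - l := by omega
    rw [hc]
    congr 1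
    rw [hm]
    ring
  rw [hfin, zero_add]
  rw [← tsum_mul_left]
  refine tsum_congr (fun j => ?_)
  have hcast : ((j + k : ℕ) : ℤ) = (j : ℤ) + k := by push_cast; ring
  rw [hcast, hk]
  have e1 : 4 * (3 * ((j : ℤ) + k) + s + 1) * (3 * m + 3 * ((j : ℤ) + k) - s - 2)
      = -(3 * m - 2 * s - 3) ^ 2 + (3 * (m + 2 * (k : ℤ) + 2 * (j : ℤ)) - 1) ^ 2 := by ring
  have e2 : 4 * (3 * ((j : ℤ) + k) + s + 2) * (3 * m + 3 * ((j : ℤ) + k) - s - 1)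
      = -(3 * m - 2 * s - 3) ^ 2 + (3 * (m + 2 * (k : ℤ) + 2 * (j : ℤ)) + 1) ^ 2 := by ring
  rw [e1, e2, zpow_add₀ hu, zpow_add₀ hu, mul_sub]
end

section
/- Let s and m be integers, set R = max(m, 2−m), and let u be a complex number with 0 < |u| < 1. Then Σ_{ℓ=0}^∞ ( u^{4(3ℓ+s+1)(3m+3ℓ−s−3)} − u^{4(3ℓ+s+3)(3m+3ℓ−s−1)} ) = u^{−(3m−2s−4)²} · Σ_{j=0}^∞ ( u^{(3(R+2j)−2)²} − u^{(3(R+2j)+2)²} ), all series converging absolutely. -/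
open scoped BigOperators

namespace Stmt9Aux

/-- Norm summability of `k ↦ ‖u‖ ^ (c + 6k)^2`. -/
lemma sum_norm {u : ℂ} (hu0 : 0 < ‖u‖) (hu1 : ‖u‖ < 1) (c : ℤ) :
    Summable (fun k : ℕ => ‖u‖ ^ ((c + 6 * (k : ℤ)) ^ 2)) := by
  have hgeo : Summable (fun k : ℕ => ‖u‖ ^ (k : ℤ)) := by
    simpa [zpow_natCast] using summable_geometric_of_lt_one (norm_nonneg u) hu1
  refine Summable.of_norm_bounded_eventually_nat hgeo ?_
  filter_upwards [Filter.eventually_ge_atTop c.natAbs] with k hk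
  have hk' : (c.natAbs : ℤ) ≤ (k : ℤ) := by exact_mod_cast hk
  have habs : -(k : ℤ) ≤ c := by omega
  have h1 : (k : ℤ) ≤ (c + 6 * (k : ℤ)) ^ 2 := by nlinarith [sq_nonneg (c + 6 * (k:ℤ) - 1)]
  have h2 : ‖u‖ ^ ((c + 6 * (k : ℤ)) ^ 2) ≤ ‖u‖ ^ (k : ℤ) :=
    zpow_le_zpow_right_of_le_one₀ hu0 hu1.le h1
  have hpos : (0:ℝ) ≤ ‖u‖ ^ ((c + 6 * (k : ℤ)) ^ 2) := zpow_nonneg hu0.le _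
  calc ‖‖u‖ ^ ((c + 6 * (k : ℤ)) ^ 2)‖ = ‖u‖ ^ ((c + 6 * (k : ℤ)) ^ 2) := by
        rw [Real.norm_eq_abs, abs_of_nonneg hpos]
    _ ≤ ‖u‖ ^ (k : ℤ) := h2

lemma sumC {u : ℂ} (hu0 : 0 < ‖u‖) (hu1 : ‖u‖ < 1) (c : ℤ) :
    Summable (fun k : ℕ => u ^ ((c + 6 * (k : ℤ)) ^ 2)) := by
  refine Summable.of_norm (((sum_norm hu0 hu1 c)).congr fun k => ?_)
  rw [norm_zpow]

noncomputable def g (u : ℂ) (c : ℤ) : ℂ := ∑' k : ℕ, u ^ ((c + 6 * (k : ℤ)) ^ 2)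

noncomputable def S (u : ℂ) (c : ℤ) : ℂ := ∑' k : ℤ, u ^ ((c + 6 * k) ^ 2)

lemma S_eq {u : ℂ} (hu0 : 0 < ‖u‖) (hu1 : ‖u‖ < 1) (c : ℤ) :
    S u c = g u c + g u (6 - c) := by
  have hf₁ : Summable (fun n : ℕ => u ^ ((c + 6 * (n : ℤ)) ^ 2)) := sumC hu0 hu1 c
  have hf₂ : Summable (fun n : ℕ => u ^ ((c + 6 * (-((n : ℤ) + 1))) ^ 2)) := by
    refine (sumC hu0 hu1 (6 - c)).congr fun n => ?_
    exact congrArg (fun e : ℤ => u ^ e) (by ring)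
  have := tsum_of_nat_of_neg_add_one (f := fun k : ℤ => u ^ ((c + 6 * k) ^ 2)) hf₁ hf₂
  rw [S, this, g, g]
  congr 1
  refine tsum_congr fun n => ?_
  exact congrArg (fun e : ℤ => u ^ e) (by ring)

lemma S_shift {u : ℂ} (c t : ℤ) : S u (c + 6 * t) = S u c := by
  have := (Equiv.addLeft t).tsum_eq (fun k : ℤ => u ^ ((c + 6 * k) ^ 2))
  rw [S, S, ← this]
  refine tsum_congr fun k => ?_
  simp only [Equiv.coe_addLeft]
  exact congrArg (fun e : ℤ => u ^ e) (by ring)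

lemma S_neg {u : ℂ} (c : ℤ) : S u (-c) = S u c := by
  have := (Equiv.neg ℤ).tsum_eq (fun k : ℤ => u ^ ((c + 6 * k) ^ 2))
  rw [S, S, ← this]
  refine tsum_congr fun k => ?_
  simp only [Equiv.neg_apply]
  have : (c + 6 * -k) ^ 2 = (-c + 6 * k) ^ 2 := by ring
  rw [this]

/-- The key reflection identity. -/
lemma key {u : ℂ} (hu0 : 0 < ‖u‖) (hu1 : ‖u‖ < 1) (m : ℤ) :
    g u (3 * m - 2) - g u (3 * m + 2) = g u (4 - 3 * m) - g u (8 - 3 * m) := by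
  have h1 : S u (3 * m - 2) = S u (3 * m + 2) := by
    have e1 : S u (3 * m - 2) = S u (2 - 3 * m) := by
      rw [show (3 * m - 2 : ℤ) = -(2 - 3 * m) by ring, S_neg]
    have e2 : S u (3 * m + 2) = S u (2 - 3 * m) := by
      rw [show (3 * m + 2 : ℤ) = (2 - 3 * m) + 6 * m by ring, S_shift]
    rw [e1, e2]
  rw [S_eq hu0 hu1, S_eq hu0 hu1] at h1
  have e3 : (6 - (3 * m - 2) : ℤ) = 8 - 3 * m := by ring
  have e4 : (6 - (3 * m + 2) : ℤ) = 4 - 3 * m := by ring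
  rw [e3, e4] at h1
  linear_combination h1

end Stmt9Aux

/-- Coefficient-wise branching identity for `ch L_{−2/3}^s` of `sl(2)`-hat at level `−4/3`:
with `R = max(m, 2−m)`,
`Σ_{ℓ≥0} (u^{4(3ℓ+s+1)(3m+3ℓ−s−3)} − u^{4(3ℓ+s+3)(3m+3ℓ−s−1)})
 = u^{−(3m−2s−4)²} · Σ_{j≥0} (u^{(3(R+2j)−2)²} − u^{(3(R+2j)+2)²})`,
all series converging absolutely, for `s, m ∈ ℤ` and `0 < |u| < 1`. -/
theorem stmt_9 (s m : ℤ) (u : ℂ) (hu0 : 0 < ‖u‖) (hu1 : ‖u‖ < 1) :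
    Summable (fun l : ℕ =>
        ‖u ^ (4 * (3 * (l : ℤ) + s + 1) * (3 * m + 3 * (l : ℤ) - s - 3))
          - u ^ (4 * (3 * (l : ℤ) + s + 3) * (3 * m + 3 * (l : ℤ) - s - 1))‖) ∧
    Summable (fun j : ℕ =>
        ‖u ^ ((3 * (max m (2 - m) + 2 * (j : ℤ)) - 2) ^ 2)
          - u ^ ((3 * (max m (2 - m) + 2 * (j : ℤ)) + 2) ^ 2)‖) ∧
    (∑' l : ℕ, (u ^ (4 * (3 * (l : ℤ) + s + 1) * (3 * m + 3 * (l : ℤ) - s - 3))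
        - u ^ (4 * (3 * (l : ℤ) + s + 3) * (3 * m + 3 * (l : ℤ) - s - 1))))
      = u ^ (-(3 * m - 2 * s - 4) ^ 2) *
          ∑' j : ℕ, (u ^ ((3 * (max m (2 - m) + 2 * (j : ℤ)) - 2) ^ 2)
            - u ^ ((3 * (max m (2 - m) + 2 * (j : ℤ)) + 2) ^ 2)) := by
  have hu : u ≠ 0 := by
    intro h; simp [h] at hu0
  have hru : ‖u‖ ≠ 0 := ne_of_gt hu0
  set R : ℤ := max m (2 - m) with hR
  -- exponent identities
  have hA : ∀ l : ℕ, 4 * (3 * (l : ℤ) + s + 1) * (3 * m + 3 * (l : ℤ) - s - 3)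
      = (-(3 * m - 2 * s - 4) ^ 2) + ((3 * m - 2) + 6 * (l : ℤ)) ^ 2 := by
    intro l; ring
  have hB : ∀ l : ℕ, 4 * (3 * (l : ℤ) + s + 3) * (3 * m + 3 * (l : ℤ) - s - 1)
      = (-(3 * m - 2 * s - 4) ^ 2) + ((3 * m + 2) + 6 * (l : ℤ)) ^ 2 := by
    intro l; ring
  have hC : ∀ j : ℕ, (3 * (R + 2 * (j : ℤ)) - 2) ^ 2 = ((3 * R - 2) + 6 * (j : ℤ)) ^ 2 := by
    intro j; ring
  have hD : ∀ j : ℕ, (3 * (R + 2 * (j : ℤ)) + 2) ^ 2 = ((3 * R + 2) + 6 * (j : ℤ)) ^ 2 := by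
    intro j; ring
  -- summability, first conjunct
  have hsum1 : ∀ c : ℤ, Summable (fun l : ℕ =>
      ‖u‖ ^ ((-(3 * m - 2 * s - 4) ^ 2) + (c + 6 * (l : ℤ)) ^ 2)) := by
    intro c
    refine ((Stmt9Aux.sum_norm hu0 hu1 c).mul_left
      (‖u‖ ^ (-(3 * m - 2 * s - 4) ^ 2))).congr fun l => ?_
    rw [← zpow_add₀ hru]
  have conj1 : Summable (fun l : ℕ =>
      ‖u ^ (4 * (3 * (l : ℤ) + s + 1) * (3 * m + 3 * (l : ℤ) - s - 3))
        - u ^ (4 * (3 * (l : ℤ) + s + 3) * (3 * m + 3 * (l : ℤ) - s - 1))‖) := by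
    refine Summable.of_nonneg_of_le (fun _ => norm_nonneg _) (fun l => ?_)
      ((hsum1 (3 * m - 2)).add (hsum1 (3 * m + 2)))
    rw [← hA l, ← hB l]
    calc ‖u ^ (4 * (3 * (l : ℤ) + s + 1) * (3 * m + 3 * (l : ℤ) - s - 3))
          - u ^ (4 * (3 * (l : ℤ) + s + 3) * (3 * m + 3 * (l : ℤ) - s - 1))‖
        ≤ ‖u ^ (4 * (3 * (l : ℤ) + s + 1) * (3 * m + 3 * (l : ℤ) - s - 3))‖
          + ‖u ^ (4 * (3 * (l : ℤ) + s + 3) * (3 * m + 3 * (l : ℤ) - s - 1))‖ :=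
          norm_sub_le _ _
      _ = ‖u‖ ^ (4 * (3 * (l : ℤ) + s + 1) * (3 * m + 3 * (l : ℤ) - s - 3))
          + ‖u‖ ^ (4 * (3 * (l : ℤ) + s + 3) * (3 * m + 3 * (l : ℤ) - s - 1)) := by
          rw [norm_zpow, norm_zpow]
  -- summability, second conjunct
  have hsum2 : ∀ c : ℤ, Summable (fun j : ℕ => ‖u‖ ^ ((c + 6 * (j : ℤ)) ^ 2)) :=
    Stmt9Aux.sum_norm hu0 hu1
  have conj2 : Summable (fun j : ℕ =>
      ‖u ^ ((3 * (R + 2 * (j : ℤ)) - 2) ^ 2) - u ^ ((3 * (R + 2 * (j : ℤ)) + 2) ^ 2)‖) := by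
    refine Summable.of_nonneg_of_le (fun _ => norm_nonneg _) (fun j => ?_)
      ((hsum2 (3 * R - 2)).add (hsum2 (3 * R + 2)))
    rw [← hC j, ← hD j]
    calc ‖u ^ ((3 * (R + 2 * (j : ℤ)) - 2) ^ 2) - u ^ ((3 * (R + 2 * (j : ℤ)) + 2) ^ 2)‖
        ≤ ‖u ^ ((3 * (R + 2 * (j : ℤ)) - 2) ^ 2)‖ + ‖u ^ ((3 * (R + 2 * (j : ℤ)) + 2) ^ 2)‖ :=
          norm_sub_le _ _
      _ = ‖u‖ ^ ((3 * (R + 2 * (j : ℤ)) - 2) ^ 2) + ‖u‖ ^ ((3 * (R + 2 * (j : ℤ)) + 2) ^ 2) := by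
          rw [norm_zpow, norm_zpow]
  refine ⟨conj1, conj2, ?_⟩
  -- the equality
  have hLHS : (∑' l : ℕ, (u ^ (4 * (3 * (l : ℤ) + s + 1) * (3 * m + 3 * (l : ℤ) - s - 3))
      - u ^ (4 * (3 * (l : ℤ) + s + 3) * (3 * m + 3 * (l : ℤ) - s - 1))))
      = u ^ (-(3 * m - 2 * s - 4) ^ 2) *
        (Stmt9Aux.g u (3 * m - 2) - Stmt9Aux.g u (3 * m + 2)) := by
    have step : ∀ l : ℕ,
        u ^ (4 * (3 * (l : ℤ) + s + 1) * (3 * m + 3 * (l : ℤ) - s - 3))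
          - u ^ (4 * (3 * (l : ℤ) + s + 3) * (3 * m + 3 * (l : ℤ) - s - 1))
        = u ^ (-(3 * m - 2 * s - 4) ^ 2) *
            (u ^ (((3 * m - 2) + 6 * (l : ℤ)) ^ 2) - u ^ (((3 * m + 2) + 6 * (l : ℤ)) ^ 2)) := by
      intro l
      rw [hA l, hB l, zpow_add₀ hu, zpow_add₀ hu, mul_sub]
    rw [tsum_congr step, tsum_mul_left]
    congr 1
    rw [Summable.tsum_sub (Stmt9Aux.sumC hu0 hu1 (3 * m - 2)) (Stmt9Aux.sumC hu0 hu1 (3 * m + 2))]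
    rfl
  have hRHS : (∑' j : ℕ, (u ^ ((3 * (R + 2 * (j : ℤ)) - 2) ^ 2)
      - u ^ ((3 * (R + 2 * (j : ℤ)) + 2) ^ 2)))
      = Stmt9Aux.g u (3 * R - 2) - Stmt9Aux.g u (3 * R + 2) := by
    have step : ∀ j : ℕ,
        u ^ ((3 * (R + 2 * (j : ℤ)) - 2) ^ 2) - u ^ ((3 * (R + 2 * (j : ℤ)) + 2) ^ 2)
        = u ^ (((3 * R - 2) + 6 * (j : ℤ)) ^ 2) - u ^ (((3 * R + 2) + 6 * (j : ℤ)) ^ 2) := by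
      intro j; rw [hC j, hD j]
    rw [tsum_congr step,
      Summable.tsum_sub (Stmt9Aux.sumC hu0 hu1 (3 * R - 2)) (Stmt9Aux.sumC hu0 hu1 (3 * R + 2))]
    rfl
  rw [hLHS, hRHS]
  congr 1
  rcases max_cases m (2 - m) with ⟨h1, h2⟩ | ⟨h1, h2⟩
  · rw [hR, h1]
  · rw [hR, h1]
    have e1 : (3 * (2 - m) - 2 : ℤ) = 4 - 3 * m := by ring
    have e2 : (3 * (2 - m) + 2 : ℤ) = 8 - 3 * m := by ring
    rw [e1, e2]
    exact Stmt9Aux.key hu0 hu1 m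
end

section
/- Let s ∈ ℤ and let u, w be complex numbers with 0 < |u| < 1 and |u|^{2−2s} < |w| < |u|^{−2s−2}. For each integer m set R_m = max(m, 2−m). Then Σ_{m∈ℤ} w^{6m−4s−6} ( Σ_{ℓ=0}^∞ ( u^{4(3ℓ+s+1)(3m+3ℓ−s−2)} − u^{4(3ℓ+s+2)(3m+3ℓ−s−1)} ) ) = Σ_{m∈ℤ} w^{6m−4s−6} u^{−(3m−2s−3)²} ( Σ_{j=0}^∞ ( u^{(3(R_m+2j)−1)²} − u^{(3(R_m+2j)+1)²} ) ), where each inner series converges absolutely for 0 < |u| < 1 and both outer series over m converge absolutely in the stated annulus. -/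
open Filter Finset

/-- The basic building block `u^{(3k-1)^2} - u^{(3k+1)^2}`. -/
noncomputable def fk (u : ℂ) (k : ℤ) : ℂ :=
  u ^ ((3 * k - 1) ^ 2) - u ^ ((3 * k + 1) ^ 2)

lemma fk_neg (u : ℂ) (k : ℤ) : fk u (-k) = -fk u k := by
  unfold fk
  have h1 : (3 * (-k) - 1) ^ 2 = (3 * k + 1) ^ 2 := by ring
  have h2 : (3 * (-k) + 1) ^ 2 = (3 * k - 1) ^ 2 := by ring
  rw [h1, h2]; ring

lemma summable_zpow_of_le (q : ℝ) (hq0 : 0 < q) (hq1 : q < 1) (e : ℕ → ℤ)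
    (he : ∀ᶠ j : ℕ in atTop, (j : ℤ) ≤ e j) :
    Summable (fun j : ℕ => q ^ e j) := by
  apply Summable.of_norm_bounded_eventually_nat (g := fun j : ℕ => q ^ j)
    (summable_geometric_of_lt_one hq0.le hq1)
  filter_upwards [he] with j hj
  rw [Real.norm_eq_abs, abs_of_pos (zpow_pos hq0 _)]
  calc q ^ e j ≤ q ^ (j : ℤ) := zpow_le_zpow_right_of_le_one₀ hq0 hq1.le hj
  _ = q ^ j := zpow_natCast q j

lemma summable_norm_fk (u : ℂ) (hu0 : 0 < ‖u‖) (hu1 : ‖u‖ < 1) (a : ℤ) :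
    Summable (fun j : ℕ => ‖fk u (a + 2 * j)‖) := by
  have hev : ∀ c : ℤ, ∀ᶠ j : ℕ in atTop, (j : ℤ) ≤ (3 * (a + 2 * (j : ℤ)) + c) ^ 2 := by
    intro c
    filter_upwards [eventually_ge_atTop (3 * a + c).natAbs] with j hj
    have h1 : ((3 * a + c).natAbs : ℤ) ≤ (j : ℤ) := by exact_mod_cast hj
    have h2 : -(3 * a + c) ≤ (j : ℤ) := by omega
    have h3 : (0 : ℤ) ≤ (j : ℤ) := Int.natCast_nonneg j
    have h4 : 5 * (j : ℤ) ≤ 3 * (a + 2 * j) + c := by linarith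
    nlinarith [sq_nonneg ((j:ℤ) - 1), sq_nonneg (3 * (a + 2 * (j:ℤ)) + c - 5 * j)]
  have h1 : Summable (fun j : ℕ => ‖u‖ ^ ((3 * (a + 2 * (j:ℤ)) - 1) ^ 2)) := by
    apply summable_zpow_of_le ‖u‖ hu0 hu1
    filter_upwards [hev (-1)] with j hj
    calc (j : ℤ) ≤ (3 * (a + 2 * (j:ℤ)) + (-1)) ^ 2 := hj
    _ = (3 * (a + 2 * (j:ℤ)) - 1) ^ 2 := by ring
  have h2 : Summable (fun j : ℕ => ‖u‖ ^ ((3 * (a + 2 * (j:ℤ)) + 1) ^ 2)) :=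
    summable_zpow_of_le ‖u‖ hu0 hu1 _ (hev 1)
  apply Summable.of_nonneg_of_le (fun _ => norm_nonneg _) _ (h1.add h2)
  intro j
  unfold fk
  refine (norm_sub_le _ _).trans ?_
  simp [norm_zpow]

lemma tsum_norm_fk_le (u : ℂ) (hu0 : 0 < ‖u‖) (hu1 : ‖u‖ < 1) (a : ℤ) (ha : 1 ≤ a) :
    ∑' j : ℕ, ‖fk u (a + 2 * j)‖ ≤ 2 * (1 - ‖u‖)⁻¹ * ‖u‖ ^ ((3 * a - 1) ^ 2) := by
  set q := ‖u‖ with hqdef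
  have hqne : q ≠ 0 := hu0.ne'
  have key : ∀ j : ℕ, ‖fk u (a + 2 * j)‖ ≤ 2 * q ^ ((3 * a - 1) ^ 2) * q ^ j := by
    intro j
    have hj0 : (0 : ℤ) ≤ (j : ℤ) := Int.natCast_nonneg j
    have e1 : (3 * a - 1) ^ 2 + (j : ℤ) ≤ (3 * (a + 2 * (j:ℤ)) - 1) ^ 2 := by nlinarith
    have e2 : (3 * a - 1) ^ 2 + (j : ℤ) ≤ (3 * (a + 2 * (j:ℤ)) + 1) ^ 2 := by nlinarith
    have hbb : ∀ e : ℤ, (3 * a - 1) ^ 2 + (j : ℤ) ≤ e →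
        q ^ e ≤ q ^ ((3 * a - 1) ^ 2) * q ^ j := by
      intro e hee
      calc q ^ e ≤ q ^ ((3 * a - 1) ^ 2 + (j : ℤ)) :=
            zpow_le_zpow_right_of_le_one₀ hu0 hu1.le hee
      _ = q ^ ((3 * a - 1) ^ 2) * q ^ (j : ℤ) := zpow_add₀ hqne _ _
      _ = q ^ ((3 * a - 1) ^ 2) * q ^ j := by rw [zpow_natCast]
    unfold fk
    calc ‖u ^ ((3 * (a + 2 * (j:ℤ)) - 1) ^ 2) - u ^ ((3 * (a + 2 * (j:ℤ)) + 1) ^ 2)‖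
        ≤ ‖u ^ ((3 * (a + 2 * (j:ℤ)) - 1) ^ 2)‖ + ‖u ^ ((3 * (a + 2 * (j:ℤ)) + 1) ^ 2)‖ :=
          norm_sub_le _ _
      _ = q ^ ((3 * (a + 2 * (j:ℤ)) - 1) ^ 2) + q ^ ((3 * (a + 2 * (j:ℤ)) + 1) ^ 2) := by
          rw [norm_zpow, norm_zpow]
      _ ≤ q ^ ((3 * a - 1) ^ 2) * q ^ j + q ^ ((3 * a - 1) ^ 2) * q ^ j :=
          add_le_add (hbb _ e1) (hbb _ e2)
      _ = 2 * q ^ ((3 * a - 1) ^ 2) * q ^ j := by ring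
  have hsum2 : Summable (fun j : ℕ => 2 * q ^ ((3 * a - 1) ^ 2) * q ^ j) :=
    (summable_geometric_of_lt_one hu0.le hu1).mul_left _
  calc ∑' j : ℕ, ‖fk u (a + 2 * j)‖ ≤ ∑' j : ℕ, 2 * q ^ ((3 * a - 1) ^ 2) * q ^ j :=
      Summable.tsum_le_tsum key (summable_norm_fk u hu0 hu1 a) hsum2
  _ = 2 * q ^ ((3 * a - 1) ^ 2) * (1 - q)⁻¹ := by
      rw [tsum_mul_left, tsum_geometric_of_lt_one hu0.le hu1]
  _ = 2 * (1 - q)⁻¹ * q ^ ((3 * a - 1) ^ 2) := by ring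

/-- Full character decomposition `ch L_0^s = Σ_{m∈ℤ} ch F_{2m−2−4s/3} · ch M_{m,1}`
for `sl(2)`-hat at level `−4/3`: with `R_m = max(m, 2−m)`,
`Σ_{m∈ℤ} w^{6m−4s−6} (Σ_{ℓ≥0} (u^{4(3ℓ+s+1)(3m+3ℓ−s−2)} − u^{4(3ℓ+s+2)(3m+3ℓ−s−1)}))
 = Σ_{m∈ℤ} w^{6m−4s−6} u^{−(3m−2s−3)²} (Σ_{j≥0} (u^{(3(R_m+2j)−1)²} − u^{(3(R_m+2j)+1)²}))`,
each inner series converging absolutely for `0 < |u| < 1`, and both outer series over `m`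
converging absolutely in the annulus `|u|^{2−2s} < |w| < |u|^{−2s−2}`. -/
theorem stmt_10 (s : ℤ) (u w : ℂ)
    (hu0 : 0 < ‖u‖) (hu1 : ‖u‖ < 1)
    (hw1 : ‖u‖ ^ (2 - 2 * s) < ‖w‖) (hw2 : ‖w‖ < ‖u‖ ^ (-2 * s - 2)) :
    (∀ m : ℤ, Summable (fun l : ℕ =>
        ‖u ^ (4 * (3 * (l : ℤ) + s + 1) * (3 * m + 3 * (l : ℤ) - s - 2))
          - u ^ (4 * (3 * (l : ℤ) + s + 2) * (3 * m + 3 * (l : ℤ) - s - 1))‖)) ∧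
    (∀ m : ℤ, Summable (fun j : ℕ =>
        ‖u ^ ((3 * (max m (2 - m) + 2 * (j : ℤ)) - 1) ^ 2)
          - u ^ ((3 * (max m (2 - m) + 2 * (j : ℤ)) + 1) ^ 2)‖)) ∧
    Summable (fun m : ℤ => ‖w ^ (6 * m - 4 * s - 6) *
        ∑' l : ℕ, (u ^ (4 * (3 * (l : ℤ) + s + 1) * (3 * m + 3 * (l : ℤ) - s - 2))
          - u ^ (4 * (3 * (l : ℤ) + s + 2) * (3 * m + 3 * (l : ℤ) - s - 1)))‖) ∧
    Summable (fun m : ℤ => ‖w ^ (6 * m - 4 * s - 6) * u ^ (-(3 * m - 2 * s - 3) ^ 2) *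
        ∑' j : ℕ, (u ^ ((3 * (max m (2 - m) + 2 * (j : ℤ)) - 1) ^ 2)
          - u ^ ((3 * (max m (2 - m) + 2 * (j : ℤ)) + 1) ^ 2))‖) ∧
    (∑' m : ℤ, w ^ (6 * m - 4 * s - 6) *
        ∑' l : ℕ, (u ^ (4 * (3 * (l : ℤ) + s + 1) * (3 * m + 3 * (l : ℤ) - s - 2))
          - u ^ (4 * (3 * (l : ℤ) + s + 2) * (3 * m + 3 * (l : ℤ) - s - 1))))
      = ∑' m : ℤ, w ^ (6 * m - 4 * s - 6) * u ^ (-(3 * m - 2 * s - 3) ^ 2) *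
          ∑' j : ℕ, (u ^ ((3 * (max m (2 - m) + 2 * (j : ℤ)) - 1) ^ 2)
            - u ^ ((3 * (max m (2 - m) + 2 * (j : ℤ)) + 1) ^ 2)) := by
  have hu : u ≠ 0 := norm_pos_iff.mp hu0
  have hqne : ‖u‖ ≠ 0 := hu0.ne'
  have hw0 : 0 < ‖w‖ := lt_trans (zpow_pos hu0 _) hw1
  have hwne : ‖w‖ ≠ 0 := hw0.ne'
  -- termwise identity
  have term_eq : ∀ (m : ℤ) (l : ℕ),
      u ^ (4 * (3 * (l : ℤ) + s + 1) * (3 * m + 3 * (l : ℤ) - s - 2))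
        - u ^ (4 * (3 * (l : ℤ) + s + 2) * (3 * m + 3 * (l : ℤ) - s - 1))
      = u ^ (-(3 * m - 2 * s - 3) ^ 2) * fk u (m + 2 * l) := by
    intro m l
    have e1 : 4 * (3 * (l : ℤ) + s + 1) * (3 * m + 3 * (l : ℤ) - s - 2)
        = -(3 * m - 2 * s - 3) ^ 2 + (3 * (m + 2 * l) - 1) ^ 2 := by ring
    have e2 : 4 * (3 * (l : ℤ) + s + 2) * (3 * m + 3 * (l : ℤ) - s - 1)
        = -(3 * m - 2 * s - 3) ^ 2 + (3 * (m + 2 * l) + 1) ^ 2 := by ring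
    rw [e1, e2, zpow_add₀ hu, zpow_add₀ hu]
    unfold fk
    ring
  have hsum_fk : ∀ a : ℤ, Summable (fun j : ℕ => fk u (a + 2 * j)) :=
    fun a => (summable_norm_fk u hu0 hu1 a).of_norm
  -- telescoping / reindexing
  have tele : ∀ m : ℤ,
      ∑' l : ℕ, fk u (m + 2 * l) = ∑' j : ℕ, fk u (max m (2 - m) + 2 * j) := by
    intro m
    rcases le_or_gt (2 - m) m with hm | hm
    · rw [max_eq_left hm]
    · rw [max_eq_right hm.le]
      set t : ℕ := (1 - m).toNat with htdef
      have ht : (t : ℤ) = 1 - m := Int.toNat_of_nonneg (by omega)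
      have hsplit := Summable.sum_add_tsum_nat_add (f := fun l : ℕ => fk u (m + 2 * l)) t (hsum_fk m)
      have hzero : ∑ i ∈ Finset.range t, fk u (m + 2 * i) = 0 := by
        have hrefl := Finset.sum_range_reflect (fun i : ℕ => fk u (m + 2 * i)) t
        have hneg : ∑ j ∈ Finset.range t, fk u (m + 2 * ((t - 1 - j : ℕ) : ℤ))
            = ∑ j ∈ Finset.range t, -fk u (m + 2 * j) := by
          apply Finset.sum_congr rfl
          intro j hj
          have hjt : j < t := Finset.mem_range.mp hj
          have hc : ((t - 1 - j : ℕ) : ℤ) = (t : ℤ) - 1 - j := by omega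
          rw [hc, show m + 2 * ((t : ℤ) - 1 - (j : ℤ)) = -(m + 2 * j) by rw [ht]; ring,
            fk_neg]
        rw [hneg, Finset.sum_neg_distrib] at hrefl
        exact add_self_eq_zero.mp (by linear_combination -hrefl)
      rw [hzero, zero_add] at hsplit
      rw [← hsplit]
      refine tsum_congr fun i => ?_
      show fk u (m + 2 * ((i + t : ℕ) : ℤ)) = fk u (2 - m + 2 * (i : ℤ))
      rw [show m + 2 * ((i + t : ℕ) : ℤ) = 2 - m + 2 * (i : ℤ) by push_cast [ht]; ring]
  -- the key per-m identity, at the level of the statement's expressions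
  have key : ∀ m : ℤ,
      (∑' l : ℕ, (u ^ (4 * (3 * (l : ℤ) + s + 1) * (3 * m + 3 * (l : ℤ) - s - 2))
          - u ^ (4 * (3 * (l : ℤ) + s + 2) * (3 * m + 3 * (l : ℤ) - s - 1))))
      = u ^ (-(3 * m - 2 * s - 3) ^ 2) *
          ∑' j : ℕ, (u ^ ((3 * (max m (2 - m) + 2 * (j : ℤ)) - 1) ^ 2)
            - u ^ ((3 * (max m (2 - m) + 2 * (j : ℤ)) + 1) ^ 2)) := by
    intro m
    calc (∑' l : ℕ, (u ^ (4 * (3 * (l : ℤ) + s + 1) * (3 * m + 3 * (l : ℤ) - s - 2))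
          - u ^ (4 * (3 * (l : ℤ) + s + 2) * (3 * m + 3 * (l : ℤ) - s - 1))))
        = ∑' l : ℕ, u ^ (-(3 * m - 2 * s - 3) ^ 2) * fk u (m + 2 * l) :=
          tsum_congr (term_eq m)
      _ = u ^ (-(3 * m - 2 * s - 3) ^ 2) * ∑' l : ℕ, fk u (m + 2 * l) := tsum_mul_left
      _ = u ^ (-(3 * m - 2 * s - 3) ^ 2) * ∑' j : ℕ, fk u (max m (2 - m) + 2 * j) := by
          rw [tele m]
      _ = _ := by unfold fk; rfl
  have hR : ∀ m : ℤ, 1 ≤ max m (2 - m) := by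
    intro m
    rcases le_total m 1 with h | h
    · exact le_max_of_le_right (by omega)
    · exact le_max_of_le_left h
  -- bullet 1
  have bullet1 : ∀ m : ℤ, Summable (fun l : ℕ =>
      ‖u ^ (4 * (3 * (l : ℤ) + s + 1) * (3 * m + 3 * (l : ℤ) - s - 2))
        - u ^ (4 * (3 * (l : ℤ) + s + 2) * (3 * m + 3 * (l : ℤ) - s - 1))‖) := by
    intro m
    have := (summable_norm_fk u hu0 hu1 m).mul_left ‖u ^ (-(3 * m - 2 * s - 3) ^ 2)‖
    apply this.congr
    intro l
    rw [← norm_mul, ← term_eq m l]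
  -- bullet 2
  have bullet2 : ∀ m : ℤ, Summable (fun j : ℕ =>
      ‖u ^ ((3 * (max m (2 - m) + 2 * (j : ℤ)) - 1) ^ 2)
        - u ^ ((3 * (max m (2 - m) + 2 * (j : ℤ)) + 1) ^ 2)‖) := by
    intro m
    have := summable_norm_fk u hu0 hu1 (max m (2 - m))
    unfold fk at this
    exact this
  -- dominating function for the outer sums
  set q := ‖u‖ with hqdef
  set C : ℝ := 2 * (1 - q)⁻¹ with hCdef
  have hC : 0 < C := by
    have : 0 < 1 - q := by linarith
    positivity
  set h : ℤ → ℝ := fun m => ‖w‖ ^ (6 * m - 4 * s - 6) *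
      (C * q ^ (-(3 * m - 2 * s - 3) ^ 2 + (3 * max m (2 - m) - 1) ^ 2)) with hhdef
  have hhpos : ∀ m : ℤ, 0 < h m := by
    intro m
    have := zpow_pos hw0 (6 * m - 4 * s - 6)
    have := zpow_pos hu0 (-(3 * m - 2 * s - 3) ^ 2 + (3 * max m (2 - m) - 1) ^ 2)
    rw [hhdef]
    positivity
  -- bound on the outer term
  have hbound : ∀ m : ℤ, ‖w ^ (6 * m - 4 * s - 6) * u ^ (-(3 * m - 2 * s - 3) ^ 2) *
      ∑' j : ℕ, fk u (max m (2 - m) + 2 * j)‖ ≤ h m := by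
    intro m
    rw [norm_mul, norm_mul, norm_zpow, norm_zpow, ← hqdef]
    have h1 : ‖∑' j : ℕ, fk u (max m (2 - m) + 2 * j)‖ ≤
        C * q ^ ((3 * max m (2 - m) - 1) ^ 2) := by
      refine le_trans (norm_tsum_le_tsum_norm (summable_norm_fk u hu0 hu1 _)) ?_
      exact tsum_norm_fk_le u hu0 hu1 _ (hR m)
    calc ‖w‖ ^ (6 * m - 4 * s - 6) * q ^ (-(3 * m - 2 * s - 3) ^ 2) *
          ‖∑' j : ℕ, fk u (max m (2 - m) + 2 * j)‖
        ≤ ‖w‖ ^ (6 * m - 4 * s - 6) * q ^ (-(3 * m - 2 * s - 3) ^ 2) *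
          (C * q ^ ((3 * max m (2 - m) - 1) ^ 2)) := by
          apply mul_le_mul_of_nonneg_left h1
          positivity
      _ = h m := by
          simp only [hhdef]
          rw [zpow_add₀ hqne]
          ring
  -- summability of the dominating function
  have hsumh : Summable h := by
    apply Summable.of_nat_of_neg
    · -- positive side, ratio (‖w‖ * q^(2s+2))^6 < 1
      set r : ℝ := (‖w‖ * q ^ (2 * s + 2)) ^ (6 : ℕ) with hrdef
      have hrlt : r < 1 := by
        have hx : ‖w‖ * q ^ (2 * s + 2) < 1 := by
          have := mul_lt_mul_of_pos_right hw2 (zpow_pos hu0 (2 * s + 2))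
          rwa [← zpow_add₀ hqne, show -2 * s - 2 + (2 * s + 2) = 0 by ring, zpow_zero] at this
        exact pow_lt_one₀ (by positivity) hx (by norm_num)
      apply summable_of_ratio_norm_eventually_le hrlt
      filter_upwards [eventually_ge_atTop 1] with n hn
      have hn' : (1 : ℤ) ≤ (n : ℤ) := by exact_mod_cast hn
      have hmax1 : max ((n : ℤ)) (2 - (n : ℤ)) = (n : ℤ) := max_eq_left (by omega)
      have hmax2 : max ((n : ℤ) + 1) (2 - ((n : ℤ) + 1)) = (n : ℤ) + 1 := max_eq_left (by omega)
      have heq : h ((n : ℤ) + 1) = r * h ((n : ℤ)) := by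
        rw [hhdef]
        simp only [hmax1, hmax2]
        have ew : (6 * ((n : ℤ) + 1) - 4 * s - 6) = (6 * (n : ℤ) - 4 * s - 6) + 6 := by ring
        have eq2 : -(3 * ((n : ℤ) + 1) - 2 * s - 3) ^ 2 + (3 * ((n : ℤ) + 1) - 1) ^ 2
            = (-(3 * (n : ℤ) - 2 * s - 3) ^ 2 + (3 * (n : ℤ) - 1) ^ 2) + (12 * s + 12) := by
          ring
        rw [ew, eq2, zpow_add₀ hwne, zpow_add₀ hqne, hrdef]
        have hq6 : (q ^ (2 * s + 2)) ^ (6 : ℕ) = q ^ (12 * s + 12) := by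
          rw [← zpow_natCast (q ^ (2 * s + 2)), ← zpow_mul,
            show (2 * s + 2) * ((6 : ℕ) : ℤ) = 12 * s + 12 by push_cast; ring]
        rw [mul_pow, hq6]
        have hw6 : ‖w‖ ^ ((6 : ℤ)) = ‖w‖ ^ (6 : ℕ) := by rw [← zpow_natCast]; norm_num
        rw [hw6]
        ring
      have hcast : ((n + 1 : ℕ) : ℤ) = (n : ℤ) + 1 := by push_cast; ring
      show ‖h ((n + 1 : ℕ) : ℤ)‖ ≤ r * ‖h ((n : ℕ) : ℤ)‖
      have hr0 : (0:ℝ) ≤ r := by positivity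
      rw [hcast, heq, Real.norm_eq_abs, Real.norm_eq_abs, abs_mul,
        abs_of_nonneg hr0, abs_of_pos (hhpos _)]
    · -- negative side, ratio (q^(2-2s) * ‖w‖⁻¹)^6 < 1
      set r : ℝ := (q ^ (2 - 2 * s) * ‖w‖⁻¹) ^ (6 : ℕ) with hrdef
      have hrlt : r < 1 := by
        have hx : q ^ (2 - 2 * s) * ‖w‖⁻¹ < 1 := by
          rw [← div_eq_mul_inv, div_lt_one hw0]
          exact hw1
        exact pow_lt_one₀ (by positivity) hx (by norm_num)
      apply summable_of_ratio_norm_eventually_le hrlt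
      filter_upwards with n
      have hmax1 : max (-(n : ℤ)) (2 - (-(n : ℤ))) = 2 + (n : ℤ) := by
        rw [max_eq_right (by omega)]; ring
      have hmax2 : max (-((n : ℤ) + 1)) (2 - (-((n : ℤ) + 1))) = 2 + ((n : ℤ) + 1) := by
        rw [max_eq_right (by omega)]; ring
      have heq : h (-((n : ℤ) + 1)) = r * h (-(n : ℤ)) := by
        rw [hhdef]
        simp only [hmax1, hmax2]
        have ew : (6 * (-((n : ℤ) + 1)) - 4 * s - 6) = (6 * (-(n : ℤ)) - 4 * s - 6) + (-6) := by
          ring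
        have eq2 : -(3 * (-((n : ℤ) + 1)) - 2 * s - 3) ^ 2 + (3 * (2 + ((n : ℤ) + 1)) - 1) ^ 2
            = (-(3 * (-(n : ℤ)) - 2 * s - 3) ^ 2 + (3 * (2 + (n : ℤ)) - 1) ^ 2)
              + (12 - 12 * s) := by ring
        rw [ew, eq2, zpow_add₀ hwne, zpow_add₀ hqne, hrdef]
        have hq6 : (q ^ (2 - 2 * s)) ^ (6 : ℕ) = q ^ (12 - 12 * s) := by
          rw [← zpow_natCast (q ^ (2 - 2 * s)), ← zpow_mul,
            show (2 - 2 * s) * ((6 : ℕ) : ℤ) = 12 - 12 * s by push_cast; ring]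
        have hw6 : ‖w‖ ^ ((-6 : ℤ)) = (‖w‖⁻¹) ^ (6 : ℕ) := by
          rw [inv_pow, ← zpow_natCast ‖w‖ 6, ← zpow_neg]; norm_num
        rw [mul_pow, hq6, hw6]
        ring
      have hcast : -((n + 1 : ℕ) : ℤ) = -((n : ℤ) + 1) := by push_cast; ring
      show ‖h (-((n + 1 : ℕ) : ℤ))‖ ≤ r * ‖h (-((n : ℕ) : ℤ))‖
      have hr0 : (0:ℝ) ≤ r := by positivity
      rw [hcast, heq, Real.norm_eq_abs, Real.norm_eq_abs, abs_mul,
        abs_of_nonneg hr0, abs_of_pos (hhpos _)]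
  -- bullet 4
  have bullet4 : Summable (fun m : ℤ => ‖w ^ (6 * m - 4 * s - 6) *
      u ^ (-(3 * m - 2 * s - 3) ^ 2) *
      ∑' j : ℕ, (u ^ ((3 * (max m (2 - m) + 2 * (j : ℤ)) - 1) ^ 2)
        - u ^ ((3 * (max m (2 - m) + 2 * (j : ℤ)) + 1) ^ 2))‖) := by
    have : Summable (fun m : ℤ => ‖w ^ (6 * m - 4 * s - 6) *
        u ^ (-(3 * m - 2 * s - 3) ^ 2) * ∑' j : ℕ, fk u (max m (2 - m) + 2 * j)‖) :=
      Summable.of_nonneg_of_le (fun _ => norm_nonneg _) hbound hsumh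
    unfold fk at this
    exact this
  -- bullet 3
  have bullet3 : Summable (fun m : ℤ => ‖w ^ (6 * m - 4 * s - 6) *
      ∑' l : ℕ, (u ^ (4 * (3 * (l : ℤ) + s + 1) * (3 * m + 3 * (l : ℤ) - s - 2))
        - u ^ (4 * (3 * (l : ℤ) + s + 2) * (3 * m + 3 * (l : ℤ) - s - 1)))‖) := by
    apply bullet4.congr
    intro m
    rw [key m, mul_assoc]
  refine ⟨bullet1, bullet2, bullet3, bullet4, ?_⟩
  apply tsum_congr
  intro m
  rw [key m, mul_assoc]
end
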